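/- arXiv:2411.17494 — 2 statements merged into one kernel-verified Lean document; each statement's English description precedes it below -/
import Mathlib

section
/- Let f ∈ K[s,t] be a nonzero homogeneous polynomial of degree d. Suppose g₁, g₂ ∈ K[s,t] are homogeneous of degrees d₁ and d₂ respectively, with 2 ≤ d₁ ≤ d₂ and d₁ + d₂ = d + 2, that g₁ and g₂ have no common zero in K² other than (0,0), and that the apolar ideal {G ∈ K[s,t] : G∘f = 0} equals the ideal generated by g₁ and g₂. Then the d polynomials g₂·s^{d₁−2−i}t^i for 0 ≤ i ≤ d₁−2 together with g₁·s^{d₂−2−j}t^j for 0 ≤ j ≤ d₂−2 form a K-basis of the vector space W_f = {G ∈ K[s,t] homogeneous of degree d : G∘f = 0}. -/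
open MvPolynomial

/-- The apolarity action `G ∘ f = G(∂/∂s, ∂/∂t) f` for bivariate polynomials. -/
noncomputable def apolar {K : Type*} [CommSemiring K] (G f : MvPolynomial (Fin 2) K) :
    MvPolynomial (Fin 2) K :=
  ∑ a ∈ G.support, G.coeff a • ((⇑(pderiv (0 : Fin 2)))^[a 0] ((⇑(pderiv (1 : Fin 2)))^[a 1] f))

section Aux
variable {K : Type*} [Field K]

lemma apolar_eq_sum_subset (G f : MvPolynomial (Fin 2) K) (T : Finset ((Fin 2) →₀ ℕ))
    (hT : G.support ⊆ T) :
    apolar G f = ∑ a ∈ T, G.coeff a •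
      ((⇑(pderiv (0 : Fin 2)))^[a 0] ((⇑(pderiv (1 : Fin 2)))^[a 1] f)) := by
  refine Finset.sum_subset hT fun a _ ha => ?_
  rw [notMem_support_iff.mp ha, zero_smul]

noncomputable def apolarLM (f : MvPolynomial (Fin 2) K) :
    MvPolynomial (Fin 2) K →ₗ[K] MvPolynomial (Fin 2) K where
  toFun G := apolar G f
  map_add' G H := by
    classical
    show apolar (G + H) f = apolar G f + apolar H f
    rw [apolar_eq_sum_subset (G + H) f (G.support ∪ H.support) support_add,
      apolar_eq_sum_subset G f (G.support ∪ H.support) Finset.subset_union_left,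
      apolar_eq_sum_subset H f (G.support ∪ H.support) Finset.subset_union_right,
      ← Finset.sum_add_distrib]
    refine Finset.sum_congr rfl fun a _ => ?_
    rw [coeff_add, add_smul]
  map_smul' c G := by
    classical
    show apolar (c • G) f = c • apolar G f
    rw [apolar_eq_sum_subset (c • G) f G.support support_smul,
      apolar_eq_sum_subset G f G.support subset_rfl, Finset.smul_sum]
    refine Finset.sum_congr rfl fun a _ => ?_
    rw [coeff_smul, smul_assoc]

lemma apolarLM_apply (f G : MvPolynomial (Fin 2) K) : apolarLM f G = apolar G f := rfl

lemma weight_fin2 (m : Fin 2 →₀ ℕ) : (Finsupp.weight 1) m = m 0 + m 1 := by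
  rw [show (Finsupp.weight 1) m = Finsupp.degree m from
      (DFunLike.congr_fun Finsupp.degree_eq_weight_one m).symm, Finsupp.degree_apply,
    Finset.sum_subset (Finset.subset_univ m.support)
      (fun i _ hi => Finsupp.notMem_support_iff.mp hi), Fin.sum_univ_two]

lemma fin2_single_add (m : Fin 2 →₀ ℕ) :
    Finsupp.single 0 (m 0) + Finsupp.single 1 (m 1) = m := by
  ext i
  fin_cases i <;> simp [Finsupp.single_apply]

lemma X_pow_mul_X_pow_isHomogeneous (a b : ℕ) :
    (X 0 ^ a * X 1 ^ b : MvPolynomial (Fin 2) K).IsHomogeneous (a + b) := by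
  simpa using ((isHomogeneous_X K 0).pow a).mul ((isHomogeneous_X K 1).pow b)

lemma hc_mul {g : MvPolynomial (Fin 2) K} {m : ℕ} (hg : g.IsHomogeneous m)
    (a : MvPolynomial (Fin 2) K) (n : ℕ) :
    homogeneousComponent n (a * g) =
      if m ≤ n then homogeneousComponent (n - m) a * g else 0 := by
  classical
  have expand : homogeneousComponent n (a * g) =
      ∑ i ∈ Finset.range (a.totalDegree + 1),
        (if i = n - m ∧ m ≤ n then homogeneousComponent i a * g else 0) := by
    conv_lhs => rw [← sum_homogeneousComponent a, Finset.sum_mul, map_sum]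
    refine Finset.sum_congr rfl fun i _ => ?_
    have hmem : homogeneousComponent i a * g ∈ homogeneousSubmodule (Fin 2) K (i + m) :=
      (homogeneousComponent_isHomogeneous i a).mul hg
    rw [homogeneousComponent_of_mem hmem]
    exact if_congr (by omega) rfl rfl
  rw [expand]
  by_cases hmn : m ≤ n
  · rw [if_pos hmn]
    simp only [hmn, and_true]
    rw [Finset.sum_ite_eq' (Finset.range (a.totalDegree + 1)) (n - m)
      (fun i => homogeneousComponent i a * g)]
    by_cases hin : n - m ∈ Finset.range (a.totalDegree + 1)
    · rw [if_pos hin]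
    · have h0 : a.totalDegree < n - m := by
        simp only [Finset.mem_range] at hin; omega
      rw [if_neg hin, homogeneousComponent_eq_zero _ _ h0, zero_mul]
  · rw [if_neg hmn]
    exact Finset.sum_eq_zero fun i _ => if_neg (by tauto)

end Aux

section Aux2
variable {K : Type*} [Field K] [IsAlgClosed K]

variable {K : Type*} [Field K] [IsAlgClosed K]

lemma exists_zero_aux (p : MvPolynomial (Fin 2) K) (h0 : 1 ≤ degreeOf 0 p) :
    ∃ x y : K, y ≠ 0 ∧ eval ![x, y] p = 0 := by
  set q := finSuccEquiv K 1 p with hq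
  have hdeg : q.natDegree = degreeOf 0 p := natDegree_finSuccEquiv p
  have hq0 : q ≠ 0 := by
    intro h
    rw [h] at hdeg
    simp at hdeg
    omega
  have hlc : q.leadingCoeff ≠ 0 := Polynomial.leadingCoeff_ne_zero.mpr hq0
  -- find v : Fin 1 → K with eval v leadingCoeff ≠ 0 and v 0 ≠ 0
  have hne : (q.leadingCoeff * X 0 : MvPolynomial (Fin 1) K) ≠ 0 :=
    mul_ne_zero hlc (X_ne_zero 0)
  obtain ⟨v, hv⟩ : ∃ v : Fin 1 → K, eval v (q.leadingCoeff * X 0) ≠ 0 := by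
    by_contra hcon
    push_neg at hcon
    exact hne (MvPolynomial.funext fun x => by rw [hcon x, map_zero])
  rw [eval_mul, eval_X] at hv
  have hvl : eval v q.leadingCoeff ≠ 0 := fun h => hv (by rw [h, zero_mul])
  have hv0 : v 0 ≠ 0 := fun h => hv (by rw [h, mul_zero])
  set φ : Polynomial K := q.map (eval v) with hφ
  have hφdeg : φ.natDegree = q.natDegree :=
    Polynomial.natDegree_map_of_leadingCoeff_ne_zero _ hvl
  have hφ0 : φ ≠ 0 := by
    intro h
    rw [h] at hφdeg
    have : q.natDegree = 0 := by simpa using hφdeg.symm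
    omega
  have hdne : φ.degree ≠ 0 := by
    rw [Polynomial.degree_eq_natDegree hφ0]
    intro h
    have : φ.natDegree = 0 := by exact_mod_cast h
    omega
  obtain ⟨x, hx⟩ := IsAlgClosed.exists_root φ hdne
  refine ⟨x, v 0, hv0, ?_⟩
  have hcons : ![x, v 0] = Fin.cons x v := by
    funext i
    refine Fin.cases rfl (fun j => ?_) i
    rw [Fin.cons_succ, Subsingleton.elim j 0]
    rfl
  rw [hcons, eval_eq_eval_mv_eval']
  exact hx

lemma exists_nontrivial_zero (p : MvPolynomial (Fin 2) K) (hp : p.totalDegree ≠ 0) :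
    ∃ x y : K, ¬(x = 0 ∧ y = 0) ∧ eval ![x, y] p = 0 := by
  have : ∃ m ∈ p.support, ∃ i : Fin 2, m i ≠ 0 := by
    by_contra hcon
    push_neg at hcon
    exact hp ((totalDegree_eq_zero_iff _ p).mpr fun m hm i => hcon m hm i)
  obtain ⟨m, hm, i, hi⟩ := this
  have hdeginc : m i ≤ degreeOf i p := by
    rw [degreeOf_eq_sup]
    exact Finset.le_sup (f := fun m => m i) hm
  have h1le : 1 ≤ degreeOf i p := le_trans (Nat.one_le_iff_ne_zero.mpr hi) hdeginc
  fin_cases i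
  · -- degreeOf 0 ≥ 1
    obtain ⟨x, y, hy, hxy⟩ := exists_zero_aux p h1le
    exact ⟨x, y, fun h => hy h.2, hxy⟩
  · -- degreeOf 1 ≥ 1 : swap variables
    have hinj : Function.Injective (⇑(Equiv.swap (0 : Fin 2) 1)) := Equiv.injective _
    have hswap : degreeOf 0 (rename (⇑(Equiv.swap (0 : Fin 2) 1)) p) = degreeOf 1 p := by
      have := degreeOf_rename_of_injective (p := p) hinj 1
      rwa [Equiv.swap_apply_right] at this
    obtain ⟨x, y, hy, hxy⟩ := exists_zero_aux (rename (⇑(Equiv.swap (0 : Fin 2) 1)) p)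
      (by rw [hswap]; exact h1le)
    rw [eval_rename] at hxy
    have hcomp : (![x, y] ∘ ⇑(Equiv.swap (0 : Fin 2) 1)) = ![y, x] := by
      funext j
      fin_cases j
      · simp [Equiv.swap_apply_left]
      · simp [Equiv.swap_apply_right]
    rw [hcomp] at hxy
    exact ⟨y, x, fun h => hy h.1, hxy⟩

lemma isRelPrime_of_no_common_zero {g₁ g₂ : MvPolynomial (Fin 2) K}
    (h₁ : g₁ ≠ 0)
    (hcz : ∀ x y : K, eval ![x, y] g₁ = 0 → eval ![x, y] g₂ = 0 → x = 0 ∧ y = 0) :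
    IsRelPrime g₁ g₂ := by
  intro c hc₁ hc₂
  by_contra hcu
  have hc0 : c ≠ 0 := fun h => h₁ (zero_dvd_iff.mp (h ▸ hc₁))
  obtain ⟨π, hπirr, hπc⟩ := WfDvdMonoid.exists_irreducible_factor hcu hc0
  have hπ1 : π ∣ g₁ := hπc.trans hc₁
  have hπ2 : π ∣ g₂ := hπc.trans hc₂
  have hπtd : π.totalDegree ≠ 0 := by
    intro htd
    have hπmem : π ∈ homogeneousSubmodule (Fin 2) K 0 :=
      (mem_homogeneousSubmodule 0 π).mpr (isHomogeneous_of_totalDegree_zero _ htd)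
    have : π = C (coeff 0 π) := by
      rw [← homogeneousComponent_zero π, homogeneousComponent_of_mem hπmem, if_pos rfl]
    have hcne : coeff 0 π ≠ 0 := by
      intro h
      rw [h, map_zero] at this
      exact hπirr.ne_zero this
    exact hπirr.not_isUnit (this ▸ IsUnit.of_mul_eq_one (C (coeff 0 π)⁻¹)
      (by rw [← map_mul, mul_inv_cancel₀ hcne, map_one]))
  obtain ⟨x, y, hxy, hval⟩ := exists_nontrivial_zero π hπtd
  obtain ⟨a, rfl⟩ := hπ1
  obtain ⟨b, hb⟩ := hπ2
  refine hxy (hcz x y ?_ ?_)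
  · rw [eval_mul, hval, zero_mul]
  · rw [hb, eval_mul, hval, zero_mul]

end Aux2

section Aux3
variable {K : Type*} [Field K]

variable {K : Type*} [Field K]

lemma fin2_single_add' (m : Fin 2 →₀ ℕ) :
    Finsupp.single 0 (m 0) + Finsupp.single 1 (m 1) = m := by
  ext i
  fin_cases i <;> simp [Finsupp.single_apply]

lemma weight_fin2' (m : Fin 2 →₀ ℕ) : (Finsupp.weight 1) m = m 0 + m 1 := by
  rw [show (Finsupp.weight 1) m = Finsupp.degree m from
      (DFunLike.congr_fun Finsupp.degree_eq_weight_one m).symm, Finsupp.degree_apply,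
    Finset.sum_subset (Finset.subset_univ m.support)
      (fun i _ hi => Finsupp.notMem_support_iff.mp hi), Fin.sum_univ_two]

lemma monomial_smul_eq (m : Fin 2 →₀ ℕ) (c : K) :
    (monomial m c : MvPolynomial (Fin 2) K) = c • (X 0 ^ (m 0) * X 1 ^ (m 1)) := by
  rw [X_pow_eq_monomial, X_pow_eq_monomial, monomial_mul, mul_one, smul_monomial,
    smul_eq_mul, mul_one, fin2_single_add']

lemma X_pow_mul_X_pow_isHomogeneous' (a b : ℕ) :
    (X 0 ^ a * X 1 ^ b : MvPolynomial (Fin 2) K).IsHomogeneous (a + b) := by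
  simpa using ((isHomogeneous_X K (0 : Fin 2)).pow a).mul ((isHomogeneous_X K (1 : Fin 2)).pow b)

lemma mul_mem_span' {A g : MvPolynomial (Fin 2) K} {n : ℕ} (hA : A.IsHomogeneous n)
    (V : Submodule K (MvPolynomial (Fin 2) K))
    (h : ∀ a b : ℕ, a + b = n → g * X 0 ^ a * X 1 ^ b ∈ V) : A * g ∈ V := by
  rw [as_sum A, Finset.sum_mul]
  refine Submodule.sum_mem V fun m hm => ?_
  have hd : m 0 + m 1 = n := by
    have := hA (mem_support_iff.mp hm)
    rwa [weight_fin2'] at this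
  have he : (monomial m (coeff m A)) * g = (coeff m A) • (g * X 0 ^ (m 0) * X 1 ^ (m 1)) := by
    rw [monomial_smul_eq, smul_mul_assoc]
    congr 1
    ring
  rw [he]
  exact Submodule.smul_mem V _ (h (m 0) (m 1) hd)

lemma coeff_smul_X_pow_mul_X_pow (μ : Fin 2 →₀ ℕ) (c : K) (a b : ℕ) :
    coeff μ (c • (X 0 ^ a * X 1 ^ b : MvPolynomial (Fin 2) K)) =
      c * (if Finsupp.single 0 a + Finsupp.single 1 b = μ then 1 else 0) := by
  rw [coeff_smul, X_pow_eq_monomial, X_pow_eq_monomial, monomial_mul, mul_one,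
    coeff_monomial, smul_eq_mul]

lemma single_add_single_apply_one (a b : ℕ) :
    ((Finsupp.single (0 : Fin 2) a + Finsupp.single 1 b : Fin 2 →₀ ℕ)) 1 = b := by
  simp [Finsupp.single_apply]

end Aux3

theorem stmt1 {K : Type*} [Field K] [IsAlgClosed K] [CharZero K]
    (d d₁ d₂ : ℕ) (f g₁ g₂ : MvPolynomial (Fin 2) K)
    (hf : f ≠ 0) (hfd : f.IsHomogeneous d)
    (hg₁ : g₁.IsHomogeneous d₁) (hg₂ : g₂.IsHomogeneous d₂)
    (hd₁ : 2 ≤ d₁) (hd₁₂ : d₁ ≤ d₂) (hsum : d₁ + d₂ = d + 2)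
    (hcz : ∀ x y : K, eval ![x, y] g₁ = 0 → eval ![x, y] g₂ = 0 → x = 0 ∧ y = 0)
    (hap : ∀ G : MvPolynomial (Fin 2) K, apolar G f = 0 ↔ G ∈ Ideal.span {g₁, g₂}) :
    LinearIndependent K (fun i : Fin d =>
      if (i : ℕ) ≤ d₁ - 2 then g₂ * X 0 ^ (d₁ - 2 - (i : ℕ)) * X 1 ^ (i : ℕ)
      else g₁ * X 0 ^ (d₂ - 2 - ((i : ℕ) - (d₁ - 1))) * X 1 ^ ((i : ℕ) - (d₁ - 1)))
    ∧ (Submodule.span K (Set.range (fun i : Fin d =>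
        if (i : ℕ) ≤ d₁ - 2 then g₂ * X 0 ^ (d₁ - 2 - (i : ℕ)) * X 1 ^ (i : ℕ)
        else g₁ * X 0 ^ (d₂ - 2 - ((i : ℕ) - (d₁ - 1))) * X 1 ^ ((i : ℕ) - (d₁ - 1))))
        : Set (MvPolynomial (Fin 2) K))
      = {G | G.IsHomogeneous d ∧ apolar G f = 0} := by
  classical
  set u : Fin d → MvPolynomial (Fin 2) K := fun i =>
    if (i : ℕ) ≤ d₁ - 2 then g₂ * X 0 ^ (d₁ - 2 - (i : ℕ)) * X 1 ^ (i : ℕ)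
    else g₁ * X 0 ^ (d₂ - 2 - ((i : ℕ) - (d₁ - 1))) * X 1 ^ ((i : ℕ) - (d₁ - 1)) with hu
  have hu_le : ∀ i : Fin d, (i : ℕ) ≤ d₁ - 2 →
      u i = g₂ * X 0 ^ (d₁ - 2 - (i : ℕ)) * X 1 ^ (i : ℕ) := by
    intro i hi; simp only [hu]; rw [if_pos hi]
  have hu_gt : ∀ i : Fin d, ¬ (i : ℕ) ≤ d₁ - 2 →
      u i = g₁ * X 0 ^ (d₂ - 2 - ((i : ℕ) - (d₁ - 1))) * X 1 ^ ((i : ℕ) - (d₁ - 1)) := by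
    intro i hi; simp only [hu]; rw [if_neg hi]
  have hg₁0 : g₁ ≠ 0 := by
    intro h
    by_cases h2 : g₂ = 0
    · exact one_ne_zero (hcz 1 1 (by rw [h, map_zero]) (by rw [h2, map_zero])).1
    · obtain ⟨x, y, hxy, hval⟩ :=
        exists_nontrivial_zero g₂ (by rw [hg₂.totalDegree h2]; omega)
      exact hxy (hcz x y (by rw [h, map_zero]) hval)
  have hg₂0 : g₂ ≠ 0 := by
    intro h
    obtain ⟨x, y, hxy, hval⟩ :=
      exists_nontrivial_zero g₁ (by rw [hg₁.totalDegree hg₁0]; omega)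
    exact hxy (hcz x y hval (by rw [h, map_zero]))
  have hrel : IsRelPrime g₁ g₂ := isRelPrime_of_no_common_zero hg₁0 hcz
  have hu_homog : ∀ i : Fin d, (u i).IsHomogeneous d := by
    intro i
    by_cases hi : (i : ℕ) ≤ d₁ - 2
    · rw [hu_le i hi, mul_assoc]
      have e : d₂ + ((d₁ - 2 - (i : ℕ)) + (i : ℕ)) = d := by omega
      have H2 := hg₂.mul (X_pow_mul_X_pow_isHomogeneous' (K := K) (d₁ - 2 - (i : ℕ)) (i : ℕ))
      rwa [e] at H2
    · rw [hu_gt i hi, mul_assoc]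
      have hik : (i : ℕ) - (d₁ - 1) ≤ d₂ - 2 := by have := i.isLt; omega
      have e : d₁ + ((d₂ - 2 - ((i : ℕ) - (d₁ - 1))) + ((i : ℕ) - (d₁ - 1))) = d := by omega
      have H2 := hg₁.mul (X_pow_mul_X_pow_isHomogeneous' (K := K)
        (d₂ - 2 - ((i : ℕ) - (d₁ - 1))) ((i : ℕ) - (d₁ - 1)))
      rwa [e] at H2
  have hu_mem : ∀ i : Fin d, u i ∈ Ideal.span {g₁, g₂} := by
    intro i
    by_cases hi : (i : ℕ) ≤ d₁ - 2
    · rw [hu_le i hi]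
      exact Ideal.mul_mem_right _ _ (Ideal.mul_mem_right _ _ (Ideal.subset_span (by simp)))
    · rw [hu_gt i hi]
      exact Ideal.mul_mem_right _ _ (Ideal.mul_mem_right _ _ (Ideal.subset_span (by simp)))
  constructor
  · -- linear independence
    rw [Fintype.linearIndependent_iff]
    intro cf hcf
    set P : MvPolynomial (Fin 2) K :=
      ∑ i ∈ Finset.univ.filter (fun i : Fin d => (i : ℕ) ≤ d₁ - 2),
        cf i • (X 0 ^ (d₁ - 2 - (i : ℕ)) * X 1 ^ (i : ℕ)) with hP
    set Q : MvPolynomial (Fin 2) K :=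
      ∑ i ∈ Finset.univ.filter (fun i : Fin d => ¬ (i : ℕ) ≤ d₁ - 2),
        cf i • (X 0 ^ (d₂ - 2 - ((i : ℕ) - (d₁ - 1))) * X 1 ^ ((i : ℕ) - (d₁ - 1))) with hQ
    have key : P * g₂ + Q * g₁ = 0 := by
      rw [hP, hQ, Finset.sum_mul, Finset.sum_mul, ← hcf,
        ← Finset.sum_filter_add_sum_filter_not Finset.univ
          (fun i : Fin d => (i : ℕ) ≤ d₁ - 2) (fun i => cf i • u i)]
      congr 1
      · refine Finset.sum_congr rfl fun i hi => ?_
        rw [smul_mul_assoc, hu_le i (Finset.mem_filter.mp hi).2]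
        congr 1; ring
      · refine Finset.sum_congr rfl fun i hi => ?_
        rw [smul_mul_assoc, hu_gt i (Finset.mem_filter.mp hi).2]
        congr 1; ring
    have hP0 : P = 0 := by
      obtain ⟨h, hh⟩ := hrel.dvd_of_dvd_mul_right
        (show g₁ ∣ P * g₂ from ⟨-Q, by linear_combination key⟩)
      have hPhom : P ∈ homogeneousSubmodule (Fin 2) K (d₁ - 2) := by
        rw [hP]
        refine Submodule.sum_mem _ fun i hi => Submodule.smul_mem _ _ ?_
        have hi' := (Finset.mem_filter.mp hi).2
        have e : (d₁ - 2 - (i : ℕ)) + (i : ℕ) = d₁ - 2 := by omega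
        have H2 := X_pow_mul_X_pow_isHomogeneous' (K := K) (d₁ - 2 - (i : ℕ)) (i : ℕ)
        rw [e] at H2
        exact (mem_homogeneousSubmodule _ _).mpr H2
      have h1 : homogeneousComponent (d₁ - 2) P = P := by
        rw [homogeneousComponent_of_mem hPhom, if_pos rfl]
      rw [hh, mul_comm g₁ h, hc_mul hg₁ h (d₁ - 2), if_neg (by omega)] at h1
      rw [hh, mul_comm g₁ h, ← h1]
    have hQ0 : Q = 0 := by
      obtain ⟨h, hh⟩ := hrel.symm.dvd_of_dvd_mul_right
        (show g₂ ∣ Q * g₁ from ⟨-P, by linear_combination key⟩)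
      have hQhom : Q ∈ homogeneousSubmodule (Fin 2) K (d₂ - 2) := by
        rw [hQ]
        refine Submodule.sum_mem _ fun i hi => Submodule.smul_mem _ _ ?_
        have hik : (i : ℕ) - (d₁ - 1) ≤ d₂ - 2 := by have := i.isLt; omega
        have e : (d₂ - 2 - ((i : ℕ) - (d₁ - 1))) + ((i : ℕ) - (d₁ - 1)) = d₂ - 2 := by omega
        have H2 := X_pow_mul_X_pow_isHomogeneous' (K := K)
          (d₂ - 2 - ((i : ℕ) - (d₁ - 1))) ((i : ℕ) - (d₁ - 1))
        rw [e] at H2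
        exact (mem_homogeneousSubmodule _ _).mpr H2
      have h1 : homogeneousComponent (d₂ - 2) Q = Q := by
        rw [homogeneousComponent_of_mem hQhom, if_pos rfl]
      rw [hh, mul_comm g₂ h, hc_mul hg₂ h (d₂ - 2), if_neg (by omega)] at h1
      rw [hh, mul_comm g₂ h, ← h1]
    intro i
    by_cases hi : (i : ℕ) ≤ d₁ - 2
    · set μ : Fin 2 →₀ ℕ :=
        Finsupp.single 0 (d₁ - 2 - (i : ℕ)) + Finsupp.single 1 (i : ℕ) with hμ
      have hco := congrArg (coeff μ) hP0
      rw [hP, coeff_sum, coeff_zero] at hco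
      have hzero : ∀ j ∈ Finset.univ.filter (fun i : Fin d => (i : ℕ) ≤ d₁ - 2), j ≠ i →
          coeff μ (cf j • (X 0 ^ (d₁ - 2 - (j : ℕ)) * X 1 ^ (j : ℕ)
            : MvPolynomial (Fin 2) K)) = 0 := by
        intro j hj hne
        rw [coeff_smul_X_pow_mul_X_pow, if_neg, mul_zero]
        intro heq
        rw [hμ] at heq
        have h2 := DFunLike.congr_fun heq (1 : Fin 2)
        rw [single_add_single_apply_one, single_add_single_apply_one] at h2
        exact hne (Fin.ext h2)
      rw [Finset.sum_eq_single_of_mem i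
        (Finset.mem_filter.mpr ⟨Finset.mem_univ i, hi⟩) hzero] at hco
      rwa [coeff_smul_X_pow_mul_X_pow, if_pos (by rw [hμ]), mul_one] at hco
    · set μ : Fin 2 →₀ ℕ :=
        Finsupp.single 0 (d₂ - 2 - ((i : ℕ) - (d₁ - 1))) +
          Finsupp.single 1 ((i : ℕ) - (d₁ - 1)) with hμ
      have hco := congrArg (coeff μ) hQ0
      rw [hQ, coeff_sum, coeff_zero] at hco
      have hzero : ∀ j ∈ Finset.univ.filter (fun i : Fin d => ¬ (i : ℕ) ≤ d₁ - 2), j ≠ i →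
          coeff μ (cf j • (X 0 ^ (d₂ - 2 - ((j : ℕ) - (d₁ - 1))) *
            X 1 ^ ((j : ℕ) - (d₁ - 1)) : MvPolynomial (Fin 2) K)) = 0 := by
        intro j hj hne
        have hj' := (Finset.mem_filter.mp hj).2
        rw [coeff_smul_X_pow_mul_X_pow, if_neg, mul_zero]
        intro heq
        rw [hμ] at heq
        have h2 := DFunLike.congr_fun heq (1 : Fin 2)
        rw [single_add_single_apply_one, single_add_single_apply_one] at h2
        exact hne (Fin.ext (by omega))
      rw [Finset.sum_eq_single_of_mem i
        (Finset.mem_filter.mpr ⟨Finset.mem_univ i, hi⟩) hzero] at hco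
      rwa [coeff_smul_X_pow_mul_X_pow, if_pos (by rw [hμ]), mul_one] at hco
  · -- the span equals the apolar space in degree d
    have hset : {G : MvPolynomial (Fin 2) K | G.IsHomogeneous d ∧ apolar G f = 0} =
        ↑(homogeneousSubmodule (Fin 2) K d ⊓ LinearMap.ker (apolarLM f)) := by
      ext G
      simp only [Set.mem_setOf_eq, SetLike.mem_coe, Submodule.mem_inf, LinearMap.mem_ker,
        mem_homogeneousSubmodule, apolarLM_apply]
    rw [hset]
    refine SetLike.coe_set_eq.mpr (le_antisymm ?_ ?_)
    · rw [Submodule.span_le]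
      rintro G ⟨i, rfl⟩
      refine Submodule.mem_inf.mpr ⟨(mem_homogeneousSubmodule _ _).mpr (hu_homog i), ?_⟩
      rw [LinearMap.mem_ker, apolarLM_apply]
      exact (hap (u i)).mpr (hu_mem i)
    · intro G hG
      obtain ⟨hGh, hGk⟩ := Submodule.mem_inf.mp hG
      have hGap : apolar G f = 0 := by rwa [LinearMap.mem_ker, apolarLM_apply] at hGk
      obtain ⟨a, b, hab⟩ := Ideal.mem_span_pair.mp ((hap G).mp hGap)
      have hGd : homogeneousComponent d G = G := by
        rw [homogeneousComponent_of_mem hGh, if_pos rfl]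
      have hrepr : homogeneousComponent (d - d₁) a * g₁ +
          homogeneousComponent (d - d₂) b * g₂ = G := by
        conv_rhs => rw [← hGd, ← hab]
        rw [map_add, hc_mul hg₁ a d, hc_mul hg₂ b d, if_pos (by omega), if_pos (by omega)]
      rw [← hrepr]
      refine Submodule.add_mem _ ?_ ?_
      · refine mul_mem_span' (homogeneousComponent_isHomogeneous (d - d₁) a) _
          fun p q hpq => ?_
        refine Submodule.subset_span ⟨⟨d₁ - 1 + q, by omega⟩, ?_⟩
        rw [hu_gt ⟨d₁ - 1 + q, by omega⟩ (show ¬ d₁ - 1 + q ≤ d₁ - 2 by omega)]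
        show g₁ * X 0 ^ (d₂ - 2 - (d₁ - 1 + q - (d₁ - 1))) * X 1 ^ (d₁ - 1 + q - (d₁ - 1)) = _
        rw [show d₁ - 1 + q - (d₁ - 1) = q from by omega,
          show d₂ - 2 - q = p from by omega]
      · refine mul_mem_span' (homogeneousComponent_isHomogeneous (d - d₂) b) _
          fun p q hpq => ?_
        refine Submodule.subset_span ⟨⟨q, by omega⟩, ?_⟩
        rw [hu_le ⟨q, by omega⟩ (show q ≤ d₁ - 2 by omega)]
        show g₂ * X 0 ^ (d₁ - 2 - q) * X 1 ^ q = _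
        rw [show d₁ - 2 - q = p from by omega]
end

section
/- Let d ≥ 6 and let f ∈ K[s,t] be a nonzero homogeneous polynomial of degree d whose annihilator ideal {G ∈ K[s,t] : G∘f = 0} equals the ideal of K[s,t] generated by s³ − st² and t^{d−1}. Then for every K-basis h₁,…,h_d of W_f, the degree-2 component (ker φ_h)₂ is spanned as a K-vector space by the homogeneous quadratic polynomials of rank at most 3 contained in it. Consequently, the ideal of K[z₁,…,z_d] generated by (ker φ_h)₂ (the homogeneous ideal of the scheme X = π_p(C_d) ∪ L, where L is the trisecant line meeting π_p(C_d) in three distinct simple points) is generated by quadratic polynomials of rank at most 3; that is, X satisfies property QR(3). -/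
open MvPolynomial

/-- A polynomial `q` has rank at most `k` as a quadric: it is a sum of `k` squares of
linear forms. -/
def rankLE {K : Type*} [CommSemiring K] {σ : Type*} (k : ℕ) (q : MvPolynomial σ K) : Prop :=
  ∃ ℓ : Fin k → MvPolynomial σ K, (∀ i, (ℓ i).IsHomogeneous 1) ∧ q = ∑ i, (ℓ i) ^ 2

namespace Stmt14

noncomputable section

set_option linter.unusedVariables false
set_option linter.unreachableTactic false
set_option linter.unusedTactic false
set_option maxHeartbeats 1000000

variable {K : Type*} [Field K]

/-- exponent vector for a binary monomial -/
def pp (a b : ℕ) : Fin 2 →₀ ℕ := Finsupp.single 0 a + Finsupp.single 1 b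

/-- binary monomial s^a t^b -/
def mono (K : Type*) [Field K] (a b : ℕ) : MvPolynomial (Fin 2) K := monomial (pp a b) 1

lemma pp_inj {a b x y : ℕ} : pp a b = pp x y ↔ a = x ∧ b = y := by
  constructor
  · intro hE
    have h0 := DFunLike.congr_fun hE (0 : Fin 2)
    have h1 := DFunLike.congr_fun hE (1 : Fin 2)
    simp [pp, Finsupp.single_apply] at h0 h1
    exact ⟨h0, h1⟩
  · rintro ⟨rfl, rfl⟩; rfl

lemma pp_add (a b c e : ℕ) : pp a b + pp c e = pp (a+c) (b+e) := by
  simp only [pp, Finsupp.single_add]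
  abel

lemma mono_mul (a b c e : ℕ) : mono K a b * mono K c e = mono K (a+c) (b+e) := by
  simp [mono, monomial_mul, pp_add]

lemma coeff_mono (x y a b : ℕ) :
    coeff (pp x y) (mono K a b) = if a = x ∧ b = y then 1 else 0 := by
  simp only [mono, coeff_monomial]
  by_cases h : a = x ∧ b = y
  · rw [if_pos (pp_inj.mpr h), if_pos h]
  · rw [if_neg (fun hc => h (pp_inj.mp hc)), if_neg h]

lemma pp_degree (a b : ℕ) : ((pp a b).sum fun _ e => e) = a + b := by
  classical
  simp [pp, Finsupp.sum_add_index']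

lemma mono_homog (a b : ℕ) : (mono K a b).IsHomogeneous (a + b) := by
  apply isHomogeneous_monomial
  exact pp_degree a b

lemma mono_ne_zero (a b : ℕ) : (mono K a b) ≠ 0 := by
  intro hc
  have := congrArg (coeff (pp a b)) hc
  simp [coeff_mono] at this


variable (K) in
/-- image of u_j u_{j'} with j+j' = k : w² s^{2d-4-k} t^k -/
def M (d k : ℕ) : MvPolynomial (Fin 2) K :=
  mono K (2*d-k) k - (2:K) • mono K (2*d-2-k) (k+2) + mono K (2*d-4-k) (k+4)

variable (K) in
/-- image of v₁ u_j : s^{d+1-j} t^{d-1+j} - s^{d-1-j} t^{d+1+j} -/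
def Nn (d j : ℕ) : MvPolynomial (Fin 2) K :=
  mono K (d+1-j) (d-1+j) - mono K (d-1-j) (d+1+j)

variable (K) in
/-- the standard basis of W_f, ℕ-indexed (junk = t^d for large indices) -/
def EE (d k : ℕ) : MvPolynomial (Fin 2) K :=
  if k ≤ d-3 then mono K (d-k) k - mono K (d-2-k) (k+2)
  else if k = d-2 then mono K 1 (d-1) else mono K 0 d

section prods
variable {d : ℕ}

lemma EE_u (hd : 6 ≤ d) {k : ℕ} (hk : k ≤ d-3) :
    EE K d k = mono K (d-k) k - mono K (d-2-k) (k+2) := by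
  rw [EE, if_pos hk]

lemma EE_v1 (hd : 6 ≤ d) : EE K d (d-2) = mono K 1 (d-1) := by
  rw [EE, if_neg (by omega), if_pos rfl]

lemma EE_v2 (hd : 6 ≤ d) : EE K d (d-1) = mono K 0 d := by
  rw [EE, if_neg (by omega), if_neg (by omega)]

/-- P1 -/
lemma EE_mul_EE (hd : 6 ≤ d) {j j' : ℕ} (h1 : j ≤ d-3) (h2 : j' ≤ d-3) :
    EE K d j * EE K d j' = M K d (j+j') := by
  rw [EE_u hd h1, EE_u hd h2, M]
  rw [sub_mul, mul_sub, mul_sub, mono_mul, mono_mul, mono_mul, mono_mul]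
  rw [show d-j+(d-j') = 2*d-(j+j') from by omega,
      show d-j+(d-2-j') = 2*d-2-(j+j') from by omega,
      show j+(j'+2) = (j+j')+2 from by omega,
      show d-2-j+(d-j') = 2*d-2-(j+j') from by omega,
      show j+2+j' = (j+j')+2 from by omega,
      show d-2-j+(d-2-j') = 2*d-4-(j+j') from by omega,
      show j+2+(j'+2) = (j+j')+4 from by omega]
  have : (2:K) • mono K (2*d-2-(j+j')) (j+j'+2)
      = mono K (2*d-2-(j+j')) (j+j'+2) + mono K (2*d-2-(j+j')) (j+j'+2) := by
    rw [two_smul]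
  rw [this]; ring

/-- P2 -/
lemma EEv1_mul (hd : 6 ≤ d) {j : ℕ} (hj : j ≤ d-3) :
    EE K d (d-2) * EE K d j = Nn K d j := by
  rw [EE_v1 hd, EE_u hd hj, Nn, mul_sub, mono_mul, mono_mul]
  rw [show 1+(d-j) = d+1-j from by omega, show d-1+j = d-1+j from rfl,
      show 1+(d-2-j) = d-1-j from by omega, show d-1+(j+2) = d+1+j from by omega]

/-- P3 -/
lemma EEv2_mul (hd : 6 ≤ d) {j : ℕ} (hj : j ≤ d-3) :
    EE K d (d-1) * EE K d j = Nn K d (j+1) := by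
  rw [EE_v2 hd, EE_u hd hj, Nn, mul_sub, mono_mul, mono_mul]
  rw [show 0+(d-j) = d+1-(j+1) from by omega, show d+j = d-1+(j+1) from by omega,
      show 0+(d-2-j) = d-1-(j+1) from by omega, show d+(j+2) = d+1+(j+1) from by omega]

lemma EEv1_sq (hd : 6 ≤ d) : EE K d (d-2) * EE K d (d-2) = mono K 2 (2*d-2) := by
  rw [EE_v1 hd, mono_mul]; congr 1; omega

lemma EEv1v2 (hd : 6 ≤ d) : EE K d (d-2) * EE K d (d-1) = mono K 1 (2*d-1) := by
  rw [EE_v1 hd, EE_v2 hd, mono_mul]; congr 1; omega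

lemma EEv2_sq (hd : 6 ≤ d) : EE K d (d-1) * EE K d (d-1) = mono K 0 (2*d) := by
  rw [EE_v2 hd, mono_mul]; congr 1; omega

/-- I1 -/
lemma Nn_diff (hd : 6 ≤ d) {a : ℕ} (ha : a ≤ d-4) :
    Nn K d a - Nn K d (a+2) = M K d (d-1+a) := by
  rw [Nn, Nn, M]
  rw [show 2*d-(d-1+a) = d+1-a from by omega,
      show d-1+a+2 = d+1+a from by omega,
      show 2*d-2-(d-1+a) = d-1-a from by omega,
      show 2*d-4-(d-1+a) = d-3-a from by omega,
      show d-1+a+4 = d+3+a from by omega,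
      show d+1-(a+2) = d-1-a from by omega,
      show d-1+(a+2) = d+1+a from by omega,
      show d-1-(a+2) = d-3-a from by omega,
      show d+1+(a+2) = d+3+a from by omega]
  have : (2:K) • mono K (d-1-a) (d+1+a)
      = mono K (d-1-a) (d+1+a) + mono K (d-1-a) (d+1+a) := two_smul _ _
  rw [this]; ring

end prods

section indep
variable {d : ℕ}

lemma coeff_M (x y k : ℕ) : coeff (pp x y) (M K d k)
    = (if 2*d-k = x ∧ k = y then (1:K) else 0)
      - 2*(if 2*d-2-k = x ∧ k+2 = y then (1:K) else 0)
      + (if 2*d-4-k = x ∧ k+4 = y then (1:K) else 0) := by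
  simp [M, coeff_add, coeff_sub, coeff_smul, coeff_mono, smul_eq_mul]

lemma coeff_Nn (x y j : ℕ) : coeff (pp x y) (Nn K d j)
    = (if d+1-j = x ∧ d-1+j = y then (1:K) else 0)
      - (if d-1-j = x ∧ d+1+j = y then (1:K) else 0) := by
  simp [Nn, coeff_sub, coeff_mono]

/-- independence of the canonical images -/
lemma bigIndep (hd : 6 ≤ d) (μ ν : ℕ → K) (a b c : K)
    (heq : (∑ k ∈ Finset.range (d-1), μ k • M K d k)
       + (∑ j ∈ Finset.range (d-1), ν j • Nn K d j)
       + (a • mono K 2 (2*d-2) + b • mono K 1 (2*d-1) + c • mono K 0 (2*d)) = 0) :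
    (∀ k < d-1, μ k = 0) ∧ (∀ j < d-1, ν j = 0) ∧ a = 0 ∧ b = 0 ∧ c = 0 := by
  have key : ∀ T : ℕ,
      (∑ k ∈ Finset.range (d-1), μ k * coeff (pp (2*d-T) T) (M K d k))
      + (∑ j ∈ Finset.range (d-1), ν j * coeff (pp (2*d-T) T) (Nn K d j))
      + (a * coeff (pp (2*d-T) T) (mono K 2 (2*d-2))
         + b * coeff (pp (2*d-T) T) (mono K 1 (2*d-1))
         + c * coeff (pp (2*d-T) T) (mono K 0 (2*d))) = 0 := by
    intro T
    have := congrArg (coeff (pp (2*d-T) T)) heq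
    simpa [coeff_sum, coeff_add, coeff_smul, smul_eq_mul] using this
  have hμ : ∀ k < d-1, μ k = 0 := by
    intro k0 hk0
    induction k0 using Nat.strong_induction_on with
    | _ k0 IH =>
    have hk := key k0
    rw [Finset.sum_eq_single k0 (fun k hkmem hkne => by
        rcases lt_or_gt_of_ne hkne with hlt | hgt
        · rw [IH k hlt (by omega), zero_mul]
        · rw [coeff_M]
          split_ifs <;> first | omega | norm_num | (exfalso; omega))
      (fun hc => absurd (Finset.mem_range.mpr hk0) hc)] at hk
    rw [Finset.sum_eq_zero (fun j hj => by
        have hjr := Finset.mem_range.mp hj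
        rw [coeff_Nn]
        split_ifs <;> first | (exfalso; omega) | norm_num)] at hk
    rw [coeff_mono, coeff_mono, coeff_mono, if_neg (by omega), if_neg (by omega),
      if_neg (by omega)] at hk
    rw [coeff_M, if_pos (by omega), if_neg (by omega), if_neg (by omega)] at hk
    have : μ k0 * (1 - 2*0 + 0) = μ k0 := by ring
    rw [this] at hk
    simpa using hk
  have hν : ∀ j < d-1, ν j = 0 := by
    intro j0 hj0
    induction j0 using Nat.strong_induction_on with
    | _ j0 IH =>
    have hk := key (d-1+j0)
    rw [Finset.sum_eq_zero (fun k hkmem => by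
        rw [hμ k (Finset.mem_range.mp hkmem), zero_mul])] at hk
    rw [Finset.sum_eq_single j0 (fun j hjmem hjne => by
        have hjr := Finset.mem_range.mp hjmem
        rcases lt_or_gt_of_ne hjne with hlt | hgt
        · rw [IH j hlt (by omega), zero_mul]
        · rw [coeff_Nn]
          split_ifs <;> first | (exfalso; omega) | norm_num)
      (fun hc => absurd (Finset.mem_range.mpr hj0) hc)] at hk
    rw [coeff_mono, coeff_mono, coeff_mono, if_neg (by omega), if_neg (by omega),
      if_neg (by omega)] at hk
    rw [coeff_Nn, if_pos (by omega), if_neg (by omega)] at hk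
    have : ν j0 * (1 - 0) = ν j0 := by ring
    rw [this] at hk
    simpa using hk
  have ha : a = 0 := by
    have hk := key (2*d-2)
    rw [Finset.sum_eq_zero (fun k hkmem => by
        rw [hμ k (Finset.mem_range.mp hkmem), zero_mul])] at hk
    rw [Finset.sum_eq_zero (fun j hjmem => by
        rw [hν j (Finset.mem_range.mp hjmem), zero_mul])] at hk
    rw [coeff_mono, coeff_mono, coeff_mono, if_pos (by omega), if_neg (by omega),
      if_neg (by omega)] at hk
    simpa using hk
  have hb : b = 0 := by
    have hk := key (2*d-1)
    rw [Finset.sum_eq_zero (fun k hkmem => by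
        rw [hμ k (Finset.mem_range.mp hkmem), zero_mul])] at hk
    rw [Finset.sum_eq_zero (fun j hjmem => by
        rw [hν j (Finset.mem_range.mp hjmem), zero_mul])] at hk
    rw [coeff_mono, coeff_mono, coeff_mono, if_neg (by omega), if_pos (by omega),
      if_neg (by omega)] at hk
    simpa using hk
  have hc : c = 0 := by
    have hk := key (2*d)
    rw [Finset.sum_eq_zero (fun k hkmem => by
        rw [hμ k (Finset.mem_range.mp hkmem), zero_mul])] at hk
    rw [Finset.sum_eq_zero (fun j hjmem => by
        rw [hν j (Finset.mem_range.mp hjmem), zero_mul])] at hk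
    rw [coeff_mono, coeff_mono, coeff_mono, if_neg (by omega), if_neg (by omega),
      if_pos (by omega)] at hk
    simpa using hk
  exact ⟨hμ, hν, ha, hb, hc⟩


lemma coeff_EE (x y k : ℕ) : coeff (pp x y) (EE K d k)
    = if k ≤ d-3 then
        ((if d-k = x ∧ k = y then (1:K) else 0) - (if d-2-k = x ∧ k+2 = y then 1 else 0))
      else if k = d-2 then (if 1 = x ∧ d-1 = y then 1 else 0)
      else (if 0 = x ∧ d = y then 1 else 0) := by
  by_cases h1 : k ≤ d-3
  · rw [EE, if_pos h1, if_pos h1, coeff_sub, coeff_mono, coeff_mono]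
  · by_cases h2 : k = d-2
    · rw [EE, if_neg h1, if_neg h1, if_pos h2, if_pos h2, coeff_mono]
    · rw [EE, if_neg h1, if_neg h1, if_neg h2, if_neg h2, coeff_mono]

lemma EEindep (hd : 6 ≤ d) :
    LinearIndependent K (fun i : Fin d => EE K d (i : ℕ)) := by
  rw [Fintype.linearIndependent_iff]
  intro g hg
  set g' : ℕ → K := fun k => if hk : k < d then g ⟨k, hk⟩ else 0 with hg'def
  have hgsum : (∑ k ∈ Finset.range d, g' k • EE K d k) = 0 := by
    rw [← Fin.sum_univ_eq_sum_range (fun k => g' k • EE K d k) d]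
    rw [← hg]
    apply Finset.sum_congr rfl
    intro i _
    simp [hg'def, i.isLt]
  have key : ∀ T : ℕ, (∑ k ∈ Finset.range d, g' k * coeff (pp (d-T) T) (EE K d k)) = 0 := by
    intro T
    have := congrArg (coeff (pp (d-T) T)) hgsum
    simpa [coeff_sum, coeff_smul, smul_eq_mul] using this
  have h1 : ∀ k ≤ d-3, g' k = 0 := by
    intro k0 hk0
    induction k0 using Nat.strong_induction_on with
    | _ k0 IH =>
    have hk := key k0
    rw [Finset.sum_eq_single k0 (fun k hkmem hkne => by
        rcases lt_or_gt_of_ne hkne with hlt | hgt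
        · by_cases hk3 : k ≤ d-3
          · rw [IH k hlt (by omega), zero_mul]
          · rw [coeff_EE, if_neg hk3]
            split_ifs <;> first | (exfalso; omega) | norm_num
        · rw [coeff_EE]
          split_ifs <;> first | (exfalso; omega) | norm_num)
      (fun hc => absurd (Finset.mem_range.mpr (by omega)) hc)] at hk
    rw [coeff_EE, if_pos hk0, if_pos (by omega), if_neg (by omega)] at hk
    have : g' k0 * (1 - 0) = g' k0 := by ring
    rw [this] at hk
    simpa using hk
  have h2 : g' (d-2) = 0 := by
    have hk := key (d-1)
    rw [Finset.sum_eq_single (d-2) (fun k hkmem hkne => by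
        by_cases hk3 : k ≤ d-3
        · by_cases hkk : k = d-3
          · rw [h1 k hk3, zero_mul]
          · rw [coeff_EE, if_pos hk3]
            split_ifs <;> first | (exfalso; omega) | norm_num
        · rw [coeff_EE, if_neg hk3, if_neg (by omega)]
          rw [if_neg (by omega), mul_zero])
      (fun hc => absurd (Finset.mem_range.mpr (by omega)) hc)] at hk
    rw [coeff_EE, if_neg (by omega), if_pos rfl, if_pos (by omega)] at hk
    simpa using hk
  have h3 : g' (d-1) = 0 := by
    have hk := key d
    rw [Finset.sum_eq_single (d-1) (fun k hkmem hkne => by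
        by_cases hk3 : k ≤ d-3
        · rw [h1 k hk3, zero_mul]
        · by_cases hkk : k = d-2
          · rw [hkk, h2, zero_mul]
          · exact absurd (Finset.mem_range.mp hkmem) (by omega))
      (fun hc => absurd (Finset.mem_range.mpr (by omega)) hc)] at hk
    rw [coeff_EE, if_neg (by omega), if_neg (by omega), if_pos (by omega)] at hk
    simpa using hk
  intro i
  have : g' (i : ℕ) = g i := by simp [hg'def, i.isLt]
  rw [← this]
  rcases Nat.lt_or_ge (i : ℕ) (d-2) with hc | hc
  · exact h1 _ (by omega)
  · rcases Nat.lt_or_ge (i : ℕ) (d-1) with hc2 | hc2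
    · rw [show (i:ℕ) = d-2 from by omega]; exact h2
    · rw [show (i:ℕ) = d-1 from by omega]; exact h3


end indep

section construct
variable {d : ℕ}

lemma mono_eq (a b : ℕ) : mono K a b = X 0 ^ a * X 1 ^ b := by
  rw [X_pow_eq_monomial, X_pow_eq_monomial, monomial_mul, one_mul]
  rfl

lemma EE_homog (hd : 6 ≤ d) (k : ℕ) : (EE K d k).IsHomogeneous d := by
  rw [EE]
  split_ifs with h1 h2
  · have m1 : (mono K (d-k) k).IsHomogeneous d := by
      have := mono_homog (K := K) (d-k) k
      rwa [show d-k+k = d from by omega] at this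
    have m2 : (mono K (d-2-k) (k+2)).IsHomogeneous d := by
      have := mono_homog (K := K) (d-2-k) (k+2)
      rwa [show d-2-k+(k+2) = d from by omega] at this
    rw [← mem_homogeneousSubmodule] at m1 m2 ⊢
    exact sub_mem m1 m2
  · have := mono_homog (K := K) 1 (d-1)
    rwa [show 1+(d-1) = d from by omega] at this
  · have := mono_homog (K := K) 0 d
    rwa [show 0+d = d from by omega] at this

lemma EE_mem_ideal (hd : 6 ≤ d) (k : ℕ) :
    EE K d k ∈ Ideal.span {X 0 ^ 3 - X 0 * X 1 ^ 2, (X 1 : MvPolynomial (Fin 2) K) ^ (d - 1)} := by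
  rw [Ideal.mem_span_pair]
  have hg : (X 0 ^ 3 - X 0 * X 1 ^ 2 : MvPolynomial (Fin 2) K) = mono K 3 0 - mono K 1 2 := by
    rw [mono_eq, mono_eq]; ring
  have ht : ((X 1 : MvPolynomial (Fin 2) K) ^ (d-1)) = mono K 0 (d-1) := by
    rw [mono_eq]; ring
  rw [EE]
  split_ifs with h1 h2
  · refine ⟨mono K (d-3-k) k, 0, ?_⟩
    rw [hg, zero_mul, add_zero, mul_sub, mono_mul, mono_mul]
    rw [show d-3-k+3 = d-k from by omega, show k+0 = k from by omega,
      show d-3-k+1 = d-2-k from by omega]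
  · refine ⟨0, X 0, ?_⟩
    rw [ht, zero_mul, zero_add, show (X 0 : MvPolynomial (Fin 2) K) = mono K 1 0 from by
      rw [mono_eq]; ring, mono_mul]
    rw [show (1:ℕ)+0 = 1 from rfl, show 0+(d-1) = d-1 from by omega]
  · refine ⟨0, X 1, ?_⟩
    rw [ht, zero_mul, zero_add, show (X 1 : MvPolynomial (Fin 2) K) = mono K 0 1 from by
      rw [mono_eq]; ring, mono_mul]
    rw [show (0:ℕ)+0 = 0 from rfl, show 1+(d-1) = d from by omega]

lemma exists_y (hd : 6 ≤ d) (f : MvPolynomial (Fin 2) K)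
    (hann : ∀ G : MvPolynomial (Fin 2) K, apolar G f = 0 ↔
      G ∈ Ideal.span {X 0 ^ 3 - X 0 * X 1 ^ 2, (X 1 : MvPolynomial (Fin 2) K) ^ (d - 1)})
    (h : Fin d → MvPolynomial (Fin 2) K) (hind : LinearIndependent K h)
    (hspan : (Submodule.span K (Set.range h) : Set (MvPolynomial (Fin 2) K))
      = {G | G.IsHomogeneous d ∧ apolar G f = 0}) :
    ∃ y : ℕ → MvPolynomial (Fin d) K,
      (∀ n, n < d → aeval h (y n) = EE K d n) ∧
      (∀ n, (y n).IsHomogeneous 1) ∧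
      (∀ i : Fin d, X i ∈ Submodule.span K (Set.range (fun j : Fin d => y (j:ℕ)))) := by
  classical
  set Wsub := Submodule.span K (Set.range h) with hW
  have EW : ∀ k, EE K d k ∈ Wsub := by
    intro k
    show EE K d k ∈ (Wsub : Set _)
    rw [hspan]
    exact ⟨EE_homog hd k, (hann _).mpr (EE_mem_ideal hd k)⟩
  have hspanE_le : Submodule.span K (Set.range (fun i : Fin d => EE K d (i:ℕ))) ≤ Wsub := by
    rw [Submodule.span_le]
    rintro x ⟨i, rfl⟩
    exact EW i
  haveI : FiniteDimensional K Wsub := FiniteDimensional.span_of_finite K (Set.finite_range h)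
  have hfr1 : Module.finrank K Wsub = d := by
    rw [hW, finrank_span_eq_card hind, Fintype.card_fin]
  have hfr2 : Module.finrank K
      (Submodule.span K (Set.range (fun i : Fin d => EE K d (i:ℕ)))) = d := by
    rw [finrank_span_eq_card (EEindep hd), Fintype.card_fin]
  have hspanE : Submodule.span K (Set.range (fun i : Fin d => EE K d (i:ℕ))) = Wsub := by
    apply Submodule.eq_of_le_of_finrank_le hspanE_le
    rw [hfr1, hfr2]
  set hb : Module.Basis (Fin d) K Wsub := Module.Basis.span hind with hbdef
  set φ : Wsub →ₗ[K] MvPolynomial (Fin d) K :=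
    (Finsupp.linearCombination K (X : Fin d → MvPolynomial (Fin d) K)).comp hb.repr.toLinearMap with hφdef
  have aeval_φ : ∀ w : Wsub, aeval h (φ w) = (w : MvPolynomial (Fin 2) K) := by
    intro w
    rw [hφdef]
    simp only [LinearMap.comp_apply, LinearEquiv.coe_toLinearMap]
    rw [Finsupp.linearCombination_apply, Finsupp.sum, map_sum]
    have : ∀ i ∈ (hb.repr w).support, aeval h ((hb.repr w) i • (X i : MvPolynomial (Fin d) K))
        = (hb.repr w) i • h i := by
      intro i _
      rw [map_smul, aeval_X]
    rw [Finset.sum_congr rfl this]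
    have hrepr := hb.sum_repr w
    have : ∀ i : Fin d, ((hb.repr w) i • hb i : Wsub) = ((hb.repr w) i • ⟨h i, Submodule.subset_span (Set.mem_range_self i)⟩ : Wsub) := by
      intro i
      congr 1
      ext
      rw [hbdef, Module.Basis.span_apply]
    calc ∑ i ∈ (hb.repr w).support, (hb.repr w) i • h i
        = ∑ i : Fin d, (hb.repr w) i • h i := by
          apply Finset.sum_subset (Finset.subset_univ _)
          intro i _ hi
          rw [Finsupp.notMem_support_iff.mp hi, zero_smul]
      _ = ((∑ i : Fin d, (hb.repr w) i • hb i : Wsub) : MvPolynomial (Fin 2) K) := by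
          rw [Submodule.coe_sum]
          apply Finset.sum_congr rfl
          intro i _
          rw [Submodule.coe_smul]
          congr 1
          rw [hbdef, Module.Basis.span_apply]
      _ = (w : MvPolynomial (Fin 2) K) := by rw [hrepr]
  set y : ℕ → MvPolynomial (Fin d) K :=
    fun n => if hn : n < d then φ ⟨EE K d n, EW n⟩ else 0 with hydef
  have hy1 : ∀ n, n < d → aeval h (y n) = EE K d n := by
    intro n hn
    rw [hydef]
    simp only [dif_pos hn]
    exact aeval_φ _
  have hφhom : ∀ w : Wsub, (φ w).IsHomogeneous 1 := by
    intro w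
    rw [← mem_homogeneousSubmodule, hφdef]
    simp only [LinearMap.comp_apply, LinearEquiv.coe_toLinearMap]
    rw [Finsupp.linearCombination_apply, Finsupp.sum]
    apply Submodule.sum_mem
    intro i _
    apply Submodule.smul_mem
    rw [mem_homogeneousSubmodule]
    exact isHomogeneous_X _ _
  have hy2 : ∀ n, (y n).IsHomogeneous 1 := by
    intro n
    rw [hydef]
    by_cases hn : n < d
    · simp only [dif_pos hn]; exact hφhom _
    · simp only [dif_neg hn]
      rw [← mem_homogeneousSubmodule]
      exact Submodule.zero_mem _
  refine ⟨y, hy1, hy2, ?_⟩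
  intro i
  set EinW : Fin d → Wsub := fun j => ⟨EE K d (j:ℕ), EW _⟩ with hEinW
  have hspanEinW : Submodule.span K (Set.range EinW) = ⊤ := by
    apply Submodule.map_injective_of_injective (Submodule.injective_subtype Wsub)
    rw [Submodule.map_span, Submodule.map_subtype_top]
    have hset : (⇑Wsub.subtype '' Set.range EinW) = Set.range (fun i : Fin d => EE K d (i:ℕ)) := by
      ext x
      constructor
      · rintro ⟨w, ⟨j, rfl⟩, rfl⟩; exact ⟨j, rfl⟩
      · rintro ⟨j, rfl⟩; exact ⟨EinW j, ⟨j, rfl⟩, rfl⟩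
    rw [hset, hspanE]
  have hXi : X i = φ ⟨h i, Submodule.subset_span (Set.mem_range_self i)⟩ := by
    have : (⟨h i, Submodule.subset_span (Set.mem_range_self i)⟩ : Wsub) = hb i := by
      ext
      rw [hbdef, Module.Basis.span_apply]
    rw [this, hφdef]
    simp only [LinearMap.comp_apply, LinearEquiv.coe_toLinearMap, Module.Basis.repr_self]
    rw [Finsupp.linearCombination_single, one_smul]
  rw [hXi]
  have hmem : (⟨h i, Submodule.subset_span (Set.mem_range_self i)⟩ : Wsub)
      ∈ Submodule.span K (Set.range EinW) := by
    rw [hspanEinW]; exact Submodule.mem_top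
  have := Submodule.mem_map_of_mem (f := φ) hmem
  rw [Submodule.map_span] at this
  refine Submodule.span_mono ?_ this
  rintro x ⟨w, ⟨j, rfl⟩, rfl⟩
  refine ⟨j, ?_⟩
  show y (j:ℕ) = φ (EinW j)
  rw [hydef]
  simp only [dif_pos j.isLt]
  rfl

end construct


section red
variable {d : ℕ}

section families
variable [CharZero K]

lemma rank3_xy_z2 {σ : Type*} (ι : K) (hι : ι^2 = -1) (x y z : MvPolynomial σ K)
    (hx : x.IsHomogeneous 1) (hy : y.IsHomogeneous 1) (hz : z.IsHomogeneous 1) :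
    rankLE 3 (x*y - z^2) := by
  refine ⟨![C (2⁻¹ : K) * (x+y), C ι * C (2⁻¹ : K) * (x-y), C ι * z], ?_, ?_⟩
  · intro i
    fin_cases i
    · simpa using (isHomogeneous_C _ (2⁻¹ : K)).mul (hx.add hy)
    · have h1 : ((C ι * C (2⁻¹ : K)) : MvPolynomial σ K).IsHomogeneous 0 := by
        rw [← C_mul]; exact isHomogeneous_C _ _
      have h2 : (x - y).IsHomogeneous 1 := by
        rw [← mem_homogeneousSubmodule] at hx hy ⊢
        exact sub_mem hx hy
      simpa using h1.mul h2
    · simpa using (isHomogeneous_C _ ι).mul hz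
  · rw [Fin.sum_univ_three]
    simp only [Matrix.cons_val_zero, Matrix.cons_val_one, Matrix.head_cons,
      Matrix.cons_val_two, Matrix.tail_cons]
    have ha : (C (2⁻¹:K) : MvPolynomial σ K) * 2 = 1 := by
      rw [show (2 : MvPolynomial σ K) = C 2 from by rw [map_ofNat], ← C_mul]
      norm_num
    have hb : ((C ι : MvPolynomial σ K))^2 = -1 := by
      rw [← C_pow, hι, map_neg, map_one]
    linear_combination (-(x*y)*(1+2*(C (2⁻¹:K) : MvPolynomial σ K))) * ha
      + (-(C (2⁻¹:K) : MvPolynomial σ K)^2*(x-y)^2 - z^2) * hb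

variable (hd : 6 ≤ d) (h : Fin d → MvPolynomial (Fin 2) K)
  (y : ℕ → MvPolynomial (Fin d) K)
  (hy1 : ∀ n, n < d → aeval h (y n) = EE K d n)
  (hy2 : ∀ n, (y n).IsHomogeneous 1)

/-- the generating set of rank-≤3 quadrics in the kernel -/
def Tset (h : Fin d → MvPolynomial (Fin 2) K) : Set (MvPolynomial (Fin d) K) :=
  {q | q ∈ RingHom.ker (aeval h : MvPolynomial (Fin d) K →ₐ[K] MvPolynomial (Fin 2) K)
    ∧ q.IsHomogeneous 2 ∧ rankLE 3 q}

def HS (h : Fin d → MvPolynomial (Fin 2) K) : Submodule K (MvPolynomial (Fin d) K) :=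
  Submodule.span K (Tset h)

lemma Tmem (ι : K) (hι : ι^2 = -1) (x yy z : MvPolynomial (Fin d) K)
    (hx : x.IsHomogeneous 1) (hy : yy.IsHomogeneous 1) (hz : z.IsHomogeneous 1)
    (hker : aeval h (x*yy - z^2) = 0) : x*yy - z^2 ∈ Tset h := by
  refine ⟨?_, ?_, rank3_xy_z2 ι hι x yy z hx hy hz⟩
  · exact hker
  · have hp : (x*yy).IsHomogeneous 2 := by simpa using hx.mul hy
    have hzz : (z^2).IsHomogeneous 2 := by simpa using hz.pow 2
    rw [← mem_homogeneousSubmodule] at hp hzz ⊢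
    exact sub_mem hp hzz

variable (ι : K) (hι : ι^2 = -1)

lemma hom1_add (p q : MvPolynomial (Fin d) K) (hp : p.IsHomogeneous 1)
    (hq : q.IsHomogeneous 1) : (p+q).IsHomogeneous 1 := hp.add hq

lemma hom1_sub (p q : MvPolynomial (Fin d) K) (hp : p.IsHomogeneous 1)
    (hq : q.IsHomogeneous 1) : (p-q).IsHomogeneous 1 := by
  rw [← mem_homogeneousSubmodule]
  exact sub_mem ((mem_homogeneousSubmodule _ _).mpr hp) ((mem_homogeneousSubmodule _ _).mpr hq)

lemma hom1_Cmul (c : K) (p : MvPolynomial (Fin d) K) (hp : p.IsHomogeneous 1) :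
    (C c * p).IsHomogeneous 1 := by
  simpa using (isHomogeneous_C _ c).mul hp

include hd hy1 hy2 hι

lemma qT_mem (i : ℕ) (hi : i+2 ≤ d-3) :
    y i * y (i+2) - (y (i+1))^2 ∈ Tset h := by
  apply Tmem h ι hι _ _ _ (hy2 _) (hy2 _) (hy2 _)
  rw [map_sub, map_mul, map_pow, hy1 i (by omega), hy1 (i+2) (by omega), hy1 (i+1) (by omega)]
  have e1 : EE K d i * EE K d (i+2) = M K d (2*i+2) := by
    rw [EE_mul_EE hd (by omega) (by omega)]; try (congr 1 <;> omega)
  have e2 : EE K d (i+1) * EE K d (i+1) = M K d (2*i+2) := by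
    rw [EE_mul_EE hd (by omega) (by omega)]; try (congr 1 <;> omega)
  rw [pow_two, e1, e2, sub_self]

lemma qtT_mem (i j : ℕ) (hij : i < j) (hj : j+2 ≤ d-3) :
    (y i + y j) * (y (i+2) + y (j+2)) - (y (i+1) + y (j+1))^2 ∈ Tset h := by
  apply Tmem h ι hι _ _ _ (hom1_add _ _ (hy2 _) (hy2 _)) (hom1_add _ _ (hy2 _) (hy2 _))
    (hom1_add _ _ (hy2 _) (hy2 _))
  rw [map_sub, map_mul, map_pow, map_add, map_add, map_add,
    hy1 i (by omega), hy1 j (by omega), hy1 (i+2) (by omega), hy1 (j+2) (by omega),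
    hy1 (i+1) (by omega), hy1 (j+1) (by omega)]
  have e1 : EE K d i * EE K d (i+2) = M K d (2*i+2) := by
    rw [EE_mul_EE hd (by omega) (by omega)]; try (congr 1 <;> omega)
  have e2 : EE K d i * EE K d (j+2) = M K d (i+j+2) := by
    rw [EE_mul_EE hd (by omega) (by omega)]; try (congr 1 <;> omega)
  have e3 : EE K d j * EE K d (i+2) = M K d (i+j+2) := by
    rw [EE_mul_EE hd (by omega) (by omega)]; try (congr 1 <;> omega)
  have e4 : EE K d j * EE K d (j+2) = M K d (2*j+2) := by
    rw [EE_mul_EE hd (by omega) (by omega)]; try (congr 1 <;> omega)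
  have f1 : EE K d (i+1) * EE K d (i+1) = M K d (2*i+2) := by
    rw [EE_mul_EE hd (by omega) (by omega)]; try (congr 1 <;> omega)
  have f2 : EE K d (i+1) * EE K d (j+1) = M K d (i+j+2) := by
    rw [EE_mul_EE hd (by omega) (by omega)]; try (congr 1 <;> omega)
  have f3 : EE K d (j+1) * EE K d (j+1) = M K d (2*j+2) := by
    rw [EE_mul_EE hd (by omega) (by omega)]; try (congr 1 <;> omega)
  linear_combination e1 + e2 + e3 + e4 - f1 - 2*f2 - f3

lemma ThT_mem (a D : ℕ) (hD : 2 ≤ D) (haD : a + 2*D = d-1) :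
    y (d-2) * (y a - y (a+2)) - (y (a+D))^2 ∈ Tset h := by
  apply Tmem h ι hι _ _ _ (hy2 _) (hom1_sub _ _ (hy2 _) (hy2 _)) (hy2 _)
  rw [map_sub, map_mul, map_pow, map_sub, hy1 (d-2) (by omega), hy1 a (by omega),
    hy1 (a+2) (by omega), hy1 (a+D) (by omega)]
  have n1 : EE K d (d-2) * EE K d a = Nn K d a := EEv1_mul hd (by omega)
  have n2 : EE K d (d-2) * EE K d (a+2) = Nn K d (a+2) := EEv1_mul hd (by omega)
  have e : EE K d (a+D) * EE K d (a+D) = M K d (d-1+a) := by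
    rw [EE_mul_EE hd (by omega) (by omega)]; try (congr 1 <;> omega)
  have nd : Nn K d a - Nn K d (a+2) = M K d (d-1+a) := Nn_diff hd (by omega)
  linear_combination n1 - n2 - e + nd

lemma Th2T_mem (a D c : ℕ) (hD : 2 ≤ D) (haD : a + 2*D = d-2) (hc : c + 1 = a + D) :
    (C (2*ι) * (y (d-3) + y (d-2)) - y (d-4)) * (y a - y (a+2))
      - (y (c+1) + C ι * y c)^2 ∈ Tset h := by
  apply Tmem h ι hι _ _ _
    (hom1_sub _ _ (hom1_Cmul _ _ (hom1_add _ _ (hy2 _) (hy2 _))) (hy2 _))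
    (hom1_sub _ _ (hy2 _) (hy2 _))
    (hom1_add _ _ (hy2 _) (hom1_Cmul _ _ (hy2 _)))
  have hAι : (algebraMap K (MvPolynomial (Fin 2) K)) ι = C ι := by
    rw [MvPolynomial.algebraMap_eq]
  have hA2 : (algebraMap K (MvPolynomial (Fin 2) K)) 2 = 2 := by
    rw [MvPolynomial.algebraMap_eq, map_ofNat]
  simp only [map_sub, map_mul, map_pow, map_add, aeval_C, hAι, hA2,
    hy1 (d-3) (by omega), hy1 (d-2) (by omega), hy1 (d-4) (by omega),
    hy1 a (by omega), hy1 (a+2) (by omega), hy1 (c+1) (by omega), hy1 c (by omega)]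
  have e1 : EE K d (d-3) * EE K d a = M K d (d-3+a) := by
    rw [EE_mul_EE hd (by omega) (by omega)]; try (congr 1 <;> omega)
  have e2 : EE K d (d-3) * EE K d (a+2) = M K d (d-1+a) := by
    rw [EE_mul_EE hd (by omega) (by omega)]; try (congr 1 <;> omega)
  have n1 : EE K d (d-2) * EE K d a = Nn K d a := EEv1_mul hd (by omega)
  have n2 : EE K d (d-2) * EE K d (a+2) = Nn K d (a+2) := EEv1_mul hd (by omega)
  have e5 : EE K d (d-4) * EE K d a = M K d (d-4+a) := by
    rw [EE_mul_EE hd (by omega) (by omega)]; try (congr 1 <;> omega)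
  have e6 : EE K d (d-4) * EE K d (a+2) = M K d (d-2+a) := by
    rw [EE_mul_EE hd (by omega) (by omega)]; try (congr 1 <;> omega)
  have e7 : EE K d (c+1) * EE K d (c+1) = M K d (d-2+a) := by
    rw [EE_mul_EE hd (by omega) (by omega)]; try (congr 1 <;> omega)
  have e8 : EE K d (c+1) * EE K d c = M K d (d-3+a) := by
    rw [EE_mul_EE hd (by omega) (by omega)]; try (congr 1 <;> omega)
  have e9 : EE K d c * EE K d c = M K d (d-4+a) := by
    rw [EE_mul_EE hd (by omega) (by omega)]; try (congr 1 <;> omega)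
  have nd : Nn K d a - Nn K d (a+2) = M K d (d-1+a) := Nn_diff hd (by omega)
  have hCI : ((C ι : MvPolynomial (Fin 2) K))^2 = -1 := by
    rw [← C_pow, hι, map_neg, map_one]
  linear_combination (2*(C ι : MvPolynomial (Fin 2) K))*e1 - (2*(C ι : MvPolynomial (Fin 2) K))*e2
    + (2*(C ι : MvPolynomial (Fin 2) K))*n1 - (2*(C ι : MvPolynomial (Fin 2) K))*n2
    - e5 + e6 + (2*(C ι : MvPolynomial (Fin 2) K))*nd - e7
    - (2*(C ι : MvPolynomial (Fin 2) K))*e8 - (C ι : MvPolynomial (Fin 2) K)^2*e9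
    - (M K d (d-4+a))*hCI

lemma Th5T_mem (a D : ℕ) (hD : 2 ≤ D) (haD : a + 2*D = d-1) :
    (y (d-2) - y (d-1)) * (y a + y (a+1)) - (y (a+D))^2 ∈ Tset h := by
  apply Tmem h ι hι _ _ _ (hom1_sub _ _ (hy2 _) (hy2 _)) (hom1_add _ _ (hy2 _) (hy2 _)) (hy2 _)
  rw [map_sub, map_mul, map_pow, map_sub, map_add, hy1 (d-2) (by omega), hy1 (d-1) (by omega),
    hy1 a (by omega), hy1 (a+1) (by omega), hy1 (a+D) (by omega)]
  have n1 : EE K d (d-2) * EE K d a = Nn K d a := EEv1_mul hd (by omega)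
  have n2 : EE K d (d-2) * EE K d (a+1) = Nn K d (a+1) := EEv1_mul hd (by omega)
  have n3 : EE K d (d-1) * EE K d a = Nn K d (a+1) := EEv2_mul hd (by omega)
  have n4 : EE K d (d-1) * EE K d (a+1) = Nn K d (a+2) := by
    rw [EEv2_mul hd (by omega)]
  have e : EE K d (a+D) * EE K d (a+D) = M K d (d-1+a) := by
    rw [EE_mul_EE hd (by omega) (by omega)]; try (congr 1 <;> omega)
  have nd : Nn K d a - Nn K d (a+2) = M K d (d-1+a) := Nn_diff hd (by omega)
  linear_combination n1 + n2 - n3 - n4 - e + nd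

lemma Th6T_mem (a D : ℕ) (hD : 2 ≤ D) (haD : a + 2*D = d-1) :
    (y (d-2) + y (d-1)) * (y a - y (a+1)) - (y (a+D))^2 ∈ Tset h := by
  apply Tmem h ι hι _ _ _ (hom1_add _ _ (hy2 _) (hy2 _)) (hom1_sub _ _ (hy2 _) (hy2 _)) (hy2 _)
  rw [map_sub, map_mul, map_pow, map_add, map_sub, hy1 (d-2) (by omega), hy1 (d-1) (by omega),
    hy1 a (by omega), hy1 (a+1) (by omega), hy1 (a+D) (by omega)]
  have n1 : EE K d (d-2) * EE K d a = Nn K d a := EEv1_mul hd (by omega)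
  have n2 : EE K d (d-2) * EE K d (a+1) = Nn K d (a+1) := EEv1_mul hd (by omega)
  have n3 : EE K d (d-1) * EE K d a = Nn K d (a+1) := EEv2_mul hd (by omega)
  have n4 : EE K d (d-1) * EE K d (a+1) = Nn K d (a+2) := by
    rw [EEv2_mul hd (by omega)]
  have e : EE K d (a+D) * EE K d (a+D) = M K d (d-1+a) := by
    rw [EE_mul_EE hd (by omega) (by omega)]; try (congr 1 <;> omega)
  have nd : Nn K d a - Nn K d (a+2) = M K d (d-1+a) := Nn_diff hd (by omega)
  linear_combination n1 - n2 + n3 - n4 - e + nd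

lemma Th7T_mem (Dh : ℕ) (hdeven : d = 2*Dh) :
    y (d-1) * (y 0 - y 2) - (y Dh)^2 ∈ Tset h := by
  apply Tmem h ι hι _ _ _ (hy2 _) (hom1_sub _ _ (hy2 _) (hy2 _)) (hy2 _)
  rw [map_sub, map_mul, map_pow, map_sub, hy1 (d-1) (by omega), hy1 0 (by omega),
    hy1 2 (by omega), hy1 Dh (by omega)]
  have n1 : EE K d (d-1) * EE K d 0 = Nn K d 1 := EEv2_mul hd (by omega)
  have n2 : EE K d (d-1) * EE K d 2 = Nn K d 3 := EEv2_mul hd (by omega)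
  have e : EE K d Dh * EE K d Dh = M K d d := by
    rw [EE_mul_EE hd (by omega) (by omega)]; try (congr 1 <;> omega)
  have nd : Nn K d 1 - Nn K d 3 = M K d d := by
    have := Nn_diff (K := K) hd (a := 1) (by omega)
    rwa [show d-1+1 = d from by omega] at this
  linear_combination n1 - n2 - e + nd

end families
end red

section red2
variable {d : ℕ} [CharZero K]
variable (hd : 6 ≤ d) (h : Fin d → MvPolynomial (Fin 2) K)
  (y : ℕ → MvPolynomial (Fin d) K)
  (hy1 : ∀ n, n < d → aeval h (y n) = EE K d n)
  (hy2 : ∀ n, (y n).IsHomogeneous 1)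
  (ι : K) (hι : ι^2 = -1)

/-- canonical complement products -/
def Cfun (d : ℕ) (y : ℕ → MvPolynomial (Fin d) K) : ℕ → MvPolynomial (Fin d) K := fun i =>
  if i < d-1 then y (i/2) * y (i - i/2)
  else if i < 2*d-2 then
    (if i-(d-1) ≤ d-3 then y (i-(d-1)) * y (d-2) else y (d-3) * y (d-1))
  else if i = 2*d-2 then y (d-2) * y (d-2)
  else if i = 2*d-1 then y (d-2) * y (d-1)
  else y (d-1) * y (d-1)

def CS (y : ℕ → MvPolynomial (Fin d) K) : Submodule K (MvPolynomial (Fin d) K) :=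
  Submodule.span K (Set.range (fun i : Fin (2*d+1) => Cfun d y (i:ℕ)))

omit hd in
lemma Cfun_memCS (i : ℕ) (hi : i < 2*d+1) : Cfun d y i ∈ CS y :=
  Submodule.subset_span ⟨⟨i, hi⟩, rfl⟩

include hd in
lemma centerCS (m : ℕ) (hm : m ≤ d-2) : y (m/2) * y (m - m/2) ∈ CS y := by
  have := Cfun_memCS y m (by omega)
  rwa [Cfun, if_pos (by omega)] at this

include hd in
lemma nCS (j : ℕ) (hj : j ≤ d-3) : y j * y (d-2) ∈ CS y := by
  have := Cfun_memCS y (d-1+j) (by omega)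
  rwa [Cfun, if_neg (by omega), if_pos (by omega), if_pos (by omega),
    show d-1+j-(d-1) = j from by omega] at this

include hd in
lemma vCS : y (d-3) * y (d-1) ∈ CS y := by
  have := Cfun_memCS y (2*d-3) (by omega)
  rwa [Cfun, if_neg (by omega), if_pos (by omega), if_neg (by omega)] at this

include hd in
lemma tail1CS : y (d-2) * y (d-2) ∈ CS y := by
  have := Cfun_memCS y (2*d-2) (by omega)
  rwa [Cfun, if_neg (by omega), if_neg (by omega), if_pos rfl] at this

include hd in
lemma tail2CS : y (d-2) * y (d-1) ∈ CS y := by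
  have := Cfun_memCS y (2*d-1) (by omega)
  rwa [Cfun, if_neg (by omega), if_neg (by omega), if_neg (by omega), if_pos rfl] at this

include hd in
lemma tail3CS : y (d-1) * y (d-1) ∈ CS y := by
  have := Cfun_memCS y (2*d) (by omega)
  rwa [Cfun, if_neg (by omega), if_neg (by omega), if_neg (by omega), if_neg (by omega)] at this

include hd hy1 hy2 hι

lemma chainLem : ∀ (n k l : ℕ), l - k = n → k ≤ l → l ≤ d-3 →
    y k * y l - y ((k+l)/2) * y ((k+l) - (k+l)/2) ∈ HS h := by
  intro n
  induction n using Nat.strong_induction_on with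
  | _ n IH =>
  intro k l hn hkl hl
  rcases Nat.lt_or_ge n 2 with hn2 | hn2
  · rw [show (k+l) - (k+l)/2 = l from by omega, show (k+l)/2 = k from by omega, sub_self]
    exact Submodule.zero_mem _
  rcases Nat.lt_or_ge n 4 with hn4 | hn4
  · rcases Nat.lt_or_ge n 3 with hn3 | hn3
    · -- n = 2
      have hl2 : l = k + 2 := by omega
      subst hl2
      rw [show (k+(k+2)) - (k+(k+2))/2 = k+1 from by omega,
        show (k+(k+2))/2 = k+1 from by omega]
      have hq := qT_mem hd h y hy1 hy2 ι hι k (by omega)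
      have : y k * y (k+2) - y (k+1) * y (k+1) = y k * y (k+2) - (y (k+1))^2 := by ring
      rw [this]
      exact Submodule.subset_span hq
    · -- n = 3
      have hl3 : l = k + 3 := by omega
      subst hl3
      rw [show (k+(k+3)) - (k+(k+3))/2 = k+2 from by omega,
        show (k+(k+3))/2 = k+1 from by omega]
      have hqt := qtT_mem hd h y hy1 hy2 ι hι k (k+1) (by omega) (by omega)
      have hq1 := qT_mem hd h y hy1 hy2 ι hι k (by omega)
      have hq2 := qT_mem hd h y hy1 hy2 ι hι (k+1) (by omega)
      have hid : y k * y (k+3) - y (k+1) * y (k+2)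
          = ((y k + y (k+1)) * (y (k+2) + y (k+3)) - (y (k+1) + y (k+2))^2)
            - (y k * y (k+2) - (y (k+1))^2) - (y (k+1) * y (k+3) - (y (k+2))^2) := by
        ring
      rw [hid]
      exact sub_mem (sub_mem (Submodule.subset_span hqt) (Submodule.subset_span hq1))
        (Submodule.subset_span hq2)
  · -- n ≥ 4
    obtain ⟨j, rfl, hkj⟩ : ∃ j, l = j + 2 ∧ k < j := ⟨l-2, by omega, by omega⟩
    have IH1 := IH (n-2) (by omega) (k+1) (j+1) (by omega) (by omega) (by omega)
    have IH2 := IH (n-4) (by omega) (k+2) j (by omega) (by omega) (by omega)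
    rw [show (k+1)+(j+1) = k+(j+2) from by omega] at IH1
    rw [show (k+2)+j = k+(j+2) from by omega] at IH2
    have hqt := qtT_mem hd h y hy1 hy2 ι hι k j hkj (by omega)
    have hq1 := qT_mem hd h y hy1 hy2 ι hι k (by omega)
    have hq2 := qT_mem hd h y hy1 hy2 ι hι j (by omega)
    have hid : y k * y (j+2) - y ((k+(j+2))/2) * y ((k+(j+2)) - (k+(j+2))/2)
        = ((y (k+1) * y (j+1) - y ((k+(j+2))/2) * y ((k+(j+2)) - (k+(j+2))/2))
           + (y (k+1) * y (j+1) - y ((k+(j+2))/2) * y ((k+(j+2)) - (k+(j+2))/2)))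
          - (y (k+2) * y j - y ((k+(j+2))/2) * y ((k+(j+2)) - (k+(j+2))/2))
          + (((y k + y j) * (y (k+2) + y (j+2)) - (y (k+1) + y (j+1))^2)
             - (y k * y (k+2) - (y (k+1))^2) - (y j * y (j+2) - (y (j+1))^2)) := by
      ring
    rw [hid]
    exact add_mem (sub_mem (add_mem IH1 IH1) IH2)
      (sub_mem (sub_mem (Submodule.subset_span hqt) (Submodule.subset_span hq1))
        (Submodule.subset_span hq2))

omit hd hy1 hy2 hι in
lemma CmulMem (N : Submodule K (MvPolynomial (Fin d) K)) (c : K)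
    (x : MvPolynomial (Fin d) K) (hx : x ∈ N) : C c * x ∈ N := by
  rw [← smul_eq_C_mul]
  exact N.smul_mem c hx

omit hd hy1 hy2 hι in
lemma Ccancel (N : Submodule K (MvPolynomial (Fin d) K)) (c : K) (hc : c ≠ 0)
    (x : MvPolynomial (Fin d) K) (hx : C c * x ∈ N) : x ∈ N := by
  have := N.smul_mem c⁻¹ hx
  rwa [smul_eq_C_mul, ← mul_assoc, ← C_mul, inv_mul_cancel₀ hc, C_1, one_mul] at this

lemma evenCenter (m : ℕ) (hm1 : d-1 ≤ m) (hm2 : m ≤ 2*d-6) (hme : m % 2 = 0) :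
    y (m/2) * y (m/2) ∈ HS h ⊔ CS y := by
  obtain ⟨a, D, haD, hD, hcen, ha3⟩ :
      ∃ a D, a + 2*D = d-1 ∧ 2 ≤ D ∧ m/2 = a + D ∧ a + 2 ≤ d-3 :=
    ⟨m-(d-1), (d-1) - m/2, by omega, by omega, by omega, by omega⟩
  have hth := ThT_mem hd h y hy1 hy2 ι hι a D hD haD
  rw [hcen]
  have hid : y (a+D) * y (a+D) = (y a * y (d-2) - y (a+2) * y (d-2))
      - (y (d-2) * (y a - y (a+2)) - (y (a+D))^2) := by ring
  rw [hid]
  exact sub_mem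
    (Submodule.mem_sup_right (sub_mem (nCS hd y a (by omega)) (nCS hd y (a+2) (by omega))))
    (Submodule.mem_sup_left (Submodule.subset_span hth))

lemma pure_mem : ∀ (m k l : ℕ), k + l = m → k ≤ l → l ≤ d-3 →
    y k * y l ∈ HS h ⊔ CS y := by
  intro m
  induction m using Nat.strong_induction_on with
  | _ m IH =>
  intro k l hm hkl hl
  have hch := chainLem hd h y hy1 hy2 ι hι (l-k) k l rfl hkl hl
  rw [hm] at hch
  have hsplit : y k * y l = (y k * y l - y (m/2) * y (m - m/2)) + y (m/2) * y (m - m/2) := by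
    ring
  rw [hsplit]
  refine add_mem (Submodule.mem_sup_left hch) ?_
  rcases le_or_gt m (d-2) with hc | hc
  · exact Submodule.mem_sup_right (centerCS hd y m hc)
  rcases Nat.mod_two_eq_zero_or_one m with hme | hmo
  · rw [show m - m/2 = m/2 from by omega]
    exact evenCenter hd h y hy1 hy2 ι hι m (by omega) (by omega) hme
  · -- odd antidiagonal
    obtain ⟨cc, rfl⟩ : ∃ cc, m = 2*cc+3 := ⟨(m-3)/2, by omega⟩
    rw [show (2*cc+3) - (2*cc+3)/2 = cc+2 from by omega,
      show (2*cc+3)/2 = cc+1 from by omega]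
    obtain ⟨a, D, haD, hD, hc1, ha2, ha0⟩ :
        ∃ a D, a + 2*D = d-2 ∧ 2 ≤ D ∧ cc + 1 = a + D ∧ a + 2 ≤ d-3 ∧ a + (d-3) = 2*cc+1 :=
      ⟨2*cc+4-d, d-3-cc, by omega, by omega, by omega, by omega, by omega⟩
    have hth := Th2T_mem hd h y hy1 hy2 ι hι a D cc hD haD hc1
    have hch2 := chainLem hd h y hy1 hy2 ι hι ((d-3)-(a+2)) (a+2) (d-3) rfl (by omega) (by omega)
    rw [show (a+2)+(d-3) = 2*cc+3 from by omega,
      show (2*cc+3) - (2*cc+3)/2 = cc+2 from by omega,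
      show (2*cc+3)/2 = cc+1 from by omega] at hch2
    have hAu : y a * y (d-3) ∈ HS h ⊔ CS y :=
      IH (2*cc+1) (by omega) a (d-3) (by omega) (by omega) (by omega)
    have hFu : y a * y (d-4) ∈ HS h ⊔ CS y :=
      IH (2*cc) (by omega) a (d-4) (by omega) (by omega) (by omega)
    have hFv : y (a+2) * y (d-4) ∈ HS h ⊔ CS y :=
      IH (2*cc+2) (by omega) (a+2) (d-4) (by omega) (by omega) (by omega)
    have hBu : y a * y (d-2) ∈ CS y := nCS hd y a (by omega)
    have hBv : y (a+2) * y (d-2) ∈ CS y := nCS hd y (a+2) (by omega)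
    have hq2 : y (cc+1) * y (cc+1) ∈ HS h ⊔ CS y := by
      rcases le_or_gt (2*cc+2) (d-2) with hx | hx
      · refine Submodule.mem_sup_right ?_
        have := centerCS hd y (2*cc+2) hx
        rwa [show (2*cc+2) - (2*cc+2)/2 = cc+1 from by omega,
          show (2*cc+2)/2 = cc+1 from by omega] at this
      · have := evenCenter hd h y hy1 hy2 ι hι (2*cc+2) (by omega) (by omega) (by omega)
        rwa [show (2*cc+2)/2 = cc+1 from by omega] at this
    have hp2 : y cc * y cc ∈ HS h ⊔ CS y := by
      rcases le_or_gt (2*cc) (d-2) with hx | hx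
      · refine Submodule.mem_sup_right ?_
        have := centerCS hd y (2*cc) hx
        rwa [show (2*cc) - (2*cc)/2 = cc from by omega,
          show (2*cc)/2 = cc from by omega] at this
      · have := evenCenter hd h y hy1 hy2 ι hι (2*cc) (by omega) (by omega) (by omega)
        rwa [show (2*cc)/2 = cc from by omega] at this
    have hpq : y cc * y (cc+1) ∈ HS h ⊔ CS y :=
      IH (2*cc+1) (by omega) cc (cc+1) (by omega) (by omega) (by omega)
    have hι0 : ι ≠ 0 := by
      intro h0
      rw [h0] at hι
      norm_num at hι
    apply Ccancel _ (2*ι) (mul_ne_zero (by norm_num) hι0)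
    have hC2 : (C (2*ι) : MvPolynomial (Fin d) K) = 2 * C ι := by
      rw [map_mul, map_ofNat]
    have hkey : C (2*ι) * (y (cc+1) * y (cc+2))
        = -((C (2*ι) * (y (d-3) + y (d-2)) - y (d-4)) * (y a - y (a+2))
            - (y (cc+1) + C ι * y cc)^2)
          - C (2*ι) * (y (a+2) * y (d-3) - y (cc+1) * y (cc+2))
          + C (2*ι) * (y a * y (d-3)) + C (2*ι) * (y a * y (d-2))
          - C (2*ι) * (y (a+2) * y (d-2))
          - y a * y (d-4) + y (a+2) * y (d-4)
          - y (cc+1) * y (cc+1) - C (2*ι) * (y cc * y (cc+1))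
          - C ι * (C ι * (y cc * y cc)) := by
      rw [hC2]; ring
    rw [hkey]
    refine sub_mem (sub_mem (sub_mem (add_mem (sub_mem (sub_mem (add_mem (add_mem
      (sub_mem (neg_mem (Submodule.mem_sup_left (Submodule.subset_span hth)))
        (CmulMem _ _ _ (Submodule.mem_sup_left hch2)))
      (CmulMem _ _ _ hAu)) (CmulMem _ _ _ (Submodule.mem_sup_right hBu)))
      (CmulMem _ _ _ (Submodule.mem_sup_right hBv))) hFu) hFv) hq2)
      (CmulMem _ _ _ hpq)) (CmulMem _ _ _ (CmulMem _ _ _ hp2))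

lemma R2diff (a D : ℕ) (hD : 2 ≤ D) (haD : a + 2*D = d-1) :
    y a * y (d-1) ∈ HS h ⊔ CS y := by
  have h5 := Th5T_mem hd h y hy1 hy2 ι hι a D hD haD
  have h6 := Th6T_mem hd h y hy1 hy2 ι hι a D hD haD
  apply Ccancel _ (2:K) (by norm_num)
  have hC2 : (C (2:K) : MvPolynomial (Fin d) K) = 2 := by rw [map_ofNat]
  have hkey : C (2:K) * (y a * y (d-1))
      = (y (a+1) * y (d-2) + y (a+1) * y (d-2))
        - (((y (d-2) - y (d-1)) * (y a + y (a+1)) - (y (a+D))^2)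
           - ((y (d-2) + y (d-1)) * (y a - y (a+1)) - (y (a+D))^2)) := by
    rw [hC2]; ring
  rw [hkey]
  exact sub_mem
    (Submodule.mem_sup_right (add_mem (nCS hd y (a+1) (by omega)) (nCS hd y (a+1) (by omega))))
    (Submodule.mem_sup_left (sub_mem (Submodule.subset_span h5) (Submodule.subset_span h6)))

lemma R2sum (a D : ℕ) (hD : 2 ≤ D) (haD : a + 2*D = d-1) :
    y (a+1) * y (d-1) ∈ HS h ⊔ CS y := by
  have h5 := Th5T_mem hd h y hy1 hy2 ι hι a D hD haD
  have h6 := Th6T_mem hd h y hy1 hy2 ι hι a D hD haD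
  apply Ccancel _ (2:K) (by norm_num)
  have hC2 : (C (2:K) : MvPolynomial (Fin d) K) = 2 := by rw [map_ofNat]
  have hkey : C (2:K) * (y (a+1) * y (d-1))
      = (y a * y (d-2) + y a * y (d-2))
        - (y (a+D) * y (a+D) + y (a+D) * y (a+D))
        - (((y (d-2) - y (d-1)) * (y a + y (a+1)) - (y (a+D))^2)
           + ((y (d-2) + y (d-1)) * (y a - y (a+1)) - (y (a+D))^2)) := by
    rw [hC2]; ring
  rw [hkey]
  have hpm : y (a+D) * y (a+D) ∈ HS h ⊔ CS y :=
    pure_mem hd h y hy1 hy2 ι hι ((a+D)+(a+D)) (a+D) (a+D) rfl le_rfl (by omega)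
  exact sub_mem (sub_mem
    (Submodule.mem_sup_right (add_mem (nCS hd y a (by omega)) (nCS hd y a (by omega))))
    (add_mem hpm hpm))
    (Submodule.mem_sup_left (add_mem (Submodule.subset_span h5) (Submodule.subset_span h6)))

lemma ycase : ∀ k l : ℕ, k < d → l < d → y k * y l ∈ HS h ⊔ CS y := by
  have main : ∀ k l : ℕ, k ≤ l → l < d → y k * y l ∈ HS h ⊔ CS y := by
    intro k l hkl hld
    rcases le_or_gt l (d-3) with hl3 | hl3
    · exact pure_mem hd h y hy1 hy2 ι hι (k+l) k l rfl hkl hl3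
    rcases le_or_gt l (d-2) with hl2 | hl2
    · have hl : l = d-2 := by omega
      subst hl
      rcases le_or_gt k (d-3) with hk | hk
      · exact Submodule.mem_sup_right (nCS hd y k hk)
      · rw [show k = d-2 from by omega]
        exact Submodule.mem_sup_right (tail1CS hd y)
    · have hl : l = d-1 := by omega
      subst hl
      rcases le_or_gt k (d-4) with hk | hk
      · rcases Nat.mod_two_eq_zero_or_one (d-1-k) with hpar | hpar
        · exact R2diff hd h y hy1 hy2 ι hι k ((d-1-k)/2) (by omega) (by omega)
        · rcases Nat.eq_zero_or_pos k with rfl | hk0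
          · have h7 := Th7T_mem hd h y hy1 hy2 ι hι (d/2) (by omega)
            have hkey : y 0 * y (d-1) = (y (d-1) * (y 0 - y 2) - (y (d/2))^2)
                + y 2 * y (d-1) + y (d/2) * y (d/2) := by ring
            rw [hkey]
            refine add_mem (add_mem (Submodule.mem_sup_left (Submodule.subset_span h7)) ?_) ?_
            · have := R2sum hd h y hy1 hy2 ι hι 1 ((d-2)/2) (by omega) (by omega)
              simpa using this
            · exact pure_mem hd h y hy1 hy2 ι hι (d/2 + d/2) (d/2) (d/2) rfl le_rfl (by omega)
          · obtain ⟨a, rfl⟩ : ∃ a, k = a+1 := ⟨k-1, by omega⟩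
            exact R2sum hd h y hy1 hy2 ι hι a ((d-1-a)/2) (by omega) (by omega)
      · have hk3 : k = d-3 ∨ k = d-2 ∨ k = d-1 := by omega
        rcases hk3 with rfl | rfl | rfl
        · exact Submodule.mem_sup_right (vCS hd y)
        · exact Submodule.mem_sup_right (tail2CS hd y)
        · exact Submodule.mem_sup_right (tail3CS hd y)
  intro k l hk hl
  rcases le_total k l with hkl | hkl
  · exact main k l hkl hl
  · rw [mul_comm]
    exact main l k hkl hk

def Cimg (K : Type*) [Field K] (d : ℕ) : ℕ → MvPolynomial (Fin 2) K := fun i =>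
  if i < d-1 then M K d i
  else if i < 2*d-2 then Nn K d (i-(d-1))
  else if i = 2*d-2 then mono K 2 (2*d-2)
  else if i = 2*d-1 then mono K 1 (2*d-1)
  else mono K 0 (2*d)

omit hι in
lemma aeval_Cfun (i : ℕ) (hi : i ≤ 2*d) : aeval h (Cfun d y i) = Cimg K d i := by
  rw [Cfun, Cimg]
  by_cases h1 : i < d-1
  · rw [if_pos h1, if_pos h1, map_mul, hy1 _ (by omega), hy1 _ (by omega),
      EE_mul_EE hd (by omega) (by omega)]
    congr 1
    omega
  by_cases h2 : i < 2*d-2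
  · rw [if_neg h1, if_neg h1, if_pos h2, if_pos h2]
    by_cases h3 : i-(d-1) ≤ d-3
    · rw [if_pos h3, map_mul, hy1 _ (by omega), hy1 _ (by omega), mul_comm,
        EEv1_mul hd h3]
    · rw [if_neg h3, map_mul, hy1 _ (by omega), hy1 _ (by omega), mul_comm,
        EEv2_mul hd (show d-3 ≤ d-3 from le_rfl)]
      congr 1
      omega
  by_cases h4 : i = 2*d-2
  · rw [if_neg h1, if_neg h1, if_neg h2, if_neg h2, if_pos h4, if_pos h4, map_mul,
      hy1 _ (by omega), EEv1_sq hd]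
  by_cases h5 : i = 2*d-1
  · rw [if_neg h1, if_neg h1, if_neg h2, if_neg h2, if_neg h4, if_neg h4, if_pos h5,
      if_pos h5, map_mul, hy1 _ (by omega), hy1 _ (by omega), EEv1v2 hd]
  · rw [if_neg h1, if_neg h1, if_neg h2, if_neg h2, if_neg h4, if_neg h4, if_neg h5,
      if_neg h5, map_mul, hy1 _ (by omega), EEv2_sq hd]

omit hι in
lemma CS_ker_zero (cpoly : MvPolynomial (Fin d) K) (hcmem : cpoly ∈ CS y)
    (h0 : aeval h cpoly = 0) : cpoly = 0 := by
  rw [CS, Submodule.mem_span_range_iff_exists_fun] at hcmem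
  obtain ⟨t, ht⟩ := hcmem
  set tt : ℕ → K := fun n => if hn : n < 2*d+1 then t ⟨n, hn⟩ else 0 with httdef
  have himg : (∑ n ∈ Finset.range (2*d+1), tt n • Cimg K d n) = 0 := by
    rw [← Fin.sum_univ_eq_sum_range (fun n => tt n • Cimg K d n) (2*d+1)]
    have hcongr : ∀ i : Fin (2*d+1), i ∈ Finset.univ →
        tt (i : ℕ) • Cimg K d (i:ℕ) = t i • Cimg K d (i:ℕ) := by
      intro i _
      simp only [httdef, dif_pos i.isLt, Fin.eta]
    rw [Finset.sum_congr rfl hcongr, ← h0, ← ht, map_sum]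
    apply Finset.sum_congr rfl
    intro i _
    rw [map_smul, aeval_Cfun hd h y hy1 hy2 (i:ℕ) (by omega)]
  have hA : (∑ n ∈ Finset.Ico 0 (d-1), tt n • Cimg K d n)
      = ∑ k ∈ Finset.range (d-1), tt k • M K d k := by
    rw [← Finset.range_eq_Ico]
    apply Finset.sum_congr rfl
    intro k hk
    have := Finset.mem_range.mp hk
    rw [Cimg, if_pos (by omega)]
  have hB : (∑ n ∈ Finset.Ico (d-1) (2*d-2), tt n • Cimg K d n)
      = ∑ j ∈ Finset.range (d-1), tt (d-1+j) • Nn K d j := by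
    rw [Finset.sum_Ico_eq_sum_range, show 2*d-2-(d-1) = d-1 from by omega]
    apply Finset.sum_congr rfl
    intro j hj
    have := Finset.mem_range.mp hj
    rw [Cimg, if_neg (by omega), if_pos (by omega), show d-1+j-(d-1) = j from by omega]
  have hC : (∑ n ∈ Finset.Ico (2*d-2) (2*d+1), tt n • Cimg K d n)
      = tt (2*d-2) • mono K 2 (2*d-2) + tt (2*d-1) • mono K 1 (2*d-1)
        + tt (2*d) • mono K 0 (2*d) := by
    have e1 : Finset.Ico (2*d-2) (2*d+1) = {2*d-2, 2*d-1, 2*d} := by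
      ext n
      simp only [Finset.mem_Ico, Finset.mem_insert, Finset.mem_singleton]
      omega
    rw [e1, Finset.sum_insert (by simp; omega), Finset.sum_insert (by simp; omega),
      Finset.sum_singleton]
    rw [show Cimg K d (2*d-2) = mono K 2 (2*d-2) from by
        rw [Cimg, if_neg (by omega), if_neg (by omega), if_pos rfl],
      show Cimg K d (2*d-1) = mono K 1 (2*d-1) from by
        rw [Cimg, if_neg (by omega), if_neg (by omega), if_neg (by omega), if_pos rfl],
      show Cimg K d (2*d) = mono K 0 (2*d) from by
        rw [Cimg, if_neg (by omega), if_neg (by omega), if_neg (by omega), if_neg (by omega)]]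
    ring
  have hsplit : (∑ k ∈ Finset.range (d-1), tt k • M K d k)
        + (∑ j ∈ Finset.range (d-1), tt (d-1+j) • Nn K d j)
        + (tt (2*d-2) • mono K 2 (2*d-2) + tt (2*d-1) • mono K 1 (2*d-1)
           + tt (2*d) • mono K 0 (2*d)) = 0 := by
    rw [← hA, ← hB, ← hC, ← himg, Finset.range_eq_Ico,
      ← Finset.sum_Ico_consecutive (fun n => tt n • Cimg K d n)
        (show (0:ℕ) ≤ d-1 from by omega) (show d-1 ≤ 2*d+1 from by omega),
      ← Finset.sum_Ico_consecutive (fun n => tt n • Cimg K d n)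
        (show (d-1 : ℕ) ≤ 2*d-2 from by omega) (show 2*d-2 ≤ 2*d+1 from by omega)]
    ring
  obtain ⟨hμ, hν, ha, hb, hc⟩ := bigIndep hd tt (fun j => tt (d-1+j)) _ _ _ hsplit
  have htt : ∀ n < 2*d+1, tt n = 0 := by
    intro n hn
    rcases lt_or_ge n (d-1) with h1 | h1
    · exact hμ n h1
    rcases lt_or_ge n (2*d-2) with h2 | h2
    · have := hν (n-(d-1)) (by omega)
      simpa [show d-1+(n-(d-1)) = n from by omega] using this
    rcases lt_or_ge n (2*d-1) with h3 | h3
    · rw [show n = 2*d-2 from by omega]; exact ha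
    rcases lt_or_ge n (2*d) with h4 | h4
    · rw [show n = 2*d-1 from by omega]; exact hb
    · rw [show n = 2*d from by omega]; exact hc
  rw [← ht]
  apply Finset.sum_eq_zero
  intro i _
  have hti : t i = tt (i:ℕ) := by simp only [httdef, dif_pos i.isLt, Fin.eta]
  rw [hti, htt _ (by omega), zero_smul]

omit hd hy1 hy2 hι in
lemma degree_split (v : Fin d →₀ ℕ) (n : ℕ) (hv : (v.sum fun _ e => e) = n+1) :
    ∃ A w, v = Finsupp.single A 1 + w ∧ (w.sum fun _ e => e) = n := by
  have hne : v ≠ 0 := by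
    intro h0
    rw [h0, Finsupp.sum_zero_index] at hv
    omega
  obtain ⟨A, hA⟩ := Finsupp.support_nonempty_iff.mpr hne
  have hvA : 1 ≤ v A := by
    have := Finsupp.mem_support_iff.mp hA
    omega
  have heq : v = Finsupp.single A 1 + (v - Finsupp.single A 1) := by
    ext b
    by_cases hb : A = b
    · subst hb
      simp only [Finsupp.add_apply, Finsupp.tsub_apply, Finsupp.single_eq_same]
      omega
    · simp only [Finsupp.add_apply, Finsupp.tsub_apply, Finsupp.single_apply, if_neg hb]
      omega
  refine ⟨A, v - Finsupp.single A 1, heq, ?_⟩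
  rw [heq, Finsupp.sum_add_index' (fun _ => rfl) (fun _ _ _ => rfl),
    Finsupp.sum_single_index rfl] at hv
  omega

omit hd hy1 hy2 hι in
lemma degree_zero (v : Fin d →₀ ℕ) (hv : (v.sum fun _ e => e) = 0) : v = 0 := by
  ext b
  by_contra hb
  have hmem : b ∈ v.support := Finsupp.mem_support_iff.mpr (by simpa using hb)
  have hle : v b ≤ ∑ i ∈ v.support, v i :=
    Finset.single_le_sum (f := fun i => v i) (fun _ _ => Nat.zero_le _) hmem
  have : (∑ i ∈ v.support, v i) = v.sum fun _ e => e := rfl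
  simp only [Finsupp.coe_zero, Pi.zero_apply] at hb
  omega

omit hd hy1 hy2 hι in
lemma homog2span (q : MvPolynomial (Fin d) K) (hq : q.IsHomogeneous 2) :
    q ∈ Submodule.span K (Set.range (fun p : Fin d × Fin d =>
      (X p.1 * X p.2 : MvPolynomial (Fin d) K))) := by
  rw [q.as_sum]
  apply Submodule.sum_mem
  intro v hv
  have hdeg : (v.sum fun _ e => e) = 2 := by
    have h2 := hq (mem_support_iff.mp hv)
    simpa [Finsupp.weight_apply, smul_eq_mul] using h2
  obtain ⟨A, w, rfl, hw⟩ := degree_split v 1 hdeg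
  obtain ⟨B, w2, rfl, hw2⟩ := degree_split w 0 hw
  rw [degree_zero w2 hw2, add_zero]
  have hXA : (X A : MvPolynomial (Fin d) K) = monomial (Finsupp.single A 1) 1 := by
    rw [← X_pow_eq_monomial, pow_one]
  have hXB : (X B : MvPolynomial (Fin d) K) = monomial (Finsupp.single B 1) 1 := by
    rw [← X_pow_eq_monomial, pow_one]
  have hmon : monomial (Finsupp.single A 1 + Finsupp.single B 1)
        (coeff (Finsupp.single A 1 + Finsupp.single B 1) q)
      = (coeff (Finsupp.single A 1 + Finsupp.single B 1) q) • (X A * X B) := by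
    rw [hXA, hXB, monomial_mul, one_mul, smul_monomial, smul_eq_mul, mul_one]
  rw [hmon]
  exact Submodule.smul_mem _ _ (Submodule.subset_span ⟨(A, B), rfl⟩)

variable (hX : ∀ i : Fin d, X i ∈ Submodule.span K (Set.range (fun j : Fin d => y (j:ℕ))))

include hX in
lemma Xprod_mem (A B : Fin d) : (X A * X B : MvPolynomial (Fin d) K) ∈ HS h ⊔ CS y := by
  have hmul := Submodule.mul_mem_mul (hX A) (hX B)
  rw [Submodule.span_mul_span] at hmul
  refine Submodule.span_le.mpr ?_ hmul
  rintro z hz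
  rw [Set.mem_mul] at hz
  obtain ⟨p, hp, q, hq, rfl⟩ := hz
  obtain ⟨kk, rfl⟩ := hp
  obtain ⟨ll, rfl⟩ := hq
  exact ycase hd h y hy1 hy2 ι hι kk ll kk.isLt ll.isLt

include hX in
lemma conj1 :
    ((RingHom.ker (aeval h : MvPolynomial (Fin d) K →ₐ[K] MvPolynomial (Fin 2) K)).restrictScalars K
      ⊓ homogeneousSubmodule (Fin d) K 2) = Submodule.span K (Tset h) := by
  apply le_antisymm
  · intro q hq
    obtain ⟨hqk, hq2⟩ := Submodule.mem_inf.mp hq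
    rw [Submodule.restrictScalars_mem] at hqk
    have hq2' : q.IsHomogeneous 2 := (mem_homogeneousSubmodule _ _).mp hq2
    have hmem : q ∈ HS h ⊔ CS y := by
      have hs := homog2span q hq2'
      refine Submodule.span_le.mpr ?_ hs
      rintro z ⟨⟨A, B⟩, rfl⟩
      exact Xprod_mem hd h y hy1 hy2 ι hι hX A B
    obtain ⟨r, hr, cpoly, hcp, hsum⟩ := Submodule.mem_sup.mp hmem
    have hrker : aeval h r = 0 := by
      have hle : HS h ≤ (RingHom.ker (aeval h : MvPolynomial (Fin d) K →ₐ[K]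
          MvPolynomial (Fin 2) K)).restrictScalars K := by
        rw [HS, Submodule.span_le]
        rintro z ⟨hz1, _, _⟩
        exact hz1
      exact RingHom.mem_ker.mp (Submodule.restrictScalars_mem K _ r |>.mp (hle hr))
    have hcker : aeval h cpoly = 0 := by
      have hq0 : aeval h q = 0 := RingHom.mem_ker.mp hqk
      rw [← hsum, map_add, hrker, zero_add] at hq0
      exact hq0
    rw [← hsum, CS_ker_zero hd h y hy1 hy2 cpoly hcp hcker, add_zero]
    exact Submodule.span_le.mpr (fun z hz => Submodule.subset_span hz) hr
  · rw [Submodule.span_le]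
    rintro q ⟨hq1, hq2, _⟩
    exact Submodule.mem_inf.mpr ⟨(Submodule.restrictScalars_mem K _ q).mpr hq1,
      (mem_homogeneousSubmodule _ _).mpr hq2⟩

include hX in
lemma conj2 :
    Ideal.span {q : MvPolynomial (Fin d) K |
        q ∈ RingHom.ker (aeval h : MvPolynomial (Fin d) K →ₐ[K] MvPolynomial (Fin 2) K)
        ∧ q.IsHomogeneous 2}
      = Ideal.span {q : MvPolynomial (Fin d) K |
          q ∈ Ideal.span {q' : MvPolynomial (Fin d) K |
            q' ∈ RingHom.ker (aeval h : MvPolynomial (Fin d) K →ₐ[K] MvPolynomial (Fin 2) K)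
            ∧ q'.IsHomogeneous 2}
          ∧ q.IsHomogeneous 2 ∧ rankLE 3 q} := by
  apply le_antisymm
  · rw [Ideal.span_le]
    rintro q ⟨hq1, hq2⟩
    have hq' : q ∈ Submodule.span K (Tset h) := by
      rw [← conj1 hd h y hy1 hy2 ι hι hX]
      exact Submodule.mem_inf.mpr ⟨(Submodule.restrictScalars_mem K _ q).mpr hq1,
        (mem_homogeneousSubmodule _ _).mpr hq2⟩
    have hle : Submodule.span K (Tset h)
        ≤ (Ideal.span {q : MvPolynomial (Fin d) K |
            q ∈ Ideal.span {q' : MvPolynomial (Fin d) K |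
              q' ∈ RingHom.ker (aeval h : MvPolynomial (Fin d) K →ₐ[K] MvPolynomial (Fin 2) K)
              ∧ q'.IsHomogeneous 2}
            ∧ q.IsHomogeneous 2 ∧ rankLE 3 q}).restrictScalars K := by
      rw [Submodule.span_le]
      rintro z ⟨hz1, hz2, hz3⟩
      have hzmem : z ∈ Ideal.span {q' : MvPolynomial (Fin d) K |
          q' ∈ RingHom.ker (aeval h : MvPolynomial (Fin d) K →ₐ[K] MvPolynomial (Fin 2) K)
          ∧ q'.IsHomogeneous 2} := Ideal.subset_span ⟨hz1, hz2⟩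
      exact Ideal.subset_span ⟨hzmem, hz2, hz3⟩
    exact hle hq'
  · rw [Ideal.span_le]
    rintro q ⟨hq1, _, _⟩
    exact hq1

end red2

end
end Stmt14

theorem stmt14 {K : Type*} [Field K] [IsAlgClosed K] [CharZero K]
    (d : ℕ) (hd : 6 ≤ d) (f : MvPolynomial (Fin 2) K) (hf : f ≠ 0) (hfd : f.IsHomogeneous d)
    (hann : ∀ G : MvPolynomial (Fin 2) K, apolar G f = 0 ↔
      G ∈ Ideal.span {X 0 ^ 3 - X 0 * X 1 ^ 2, (X 1 : MvPolynomial (Fin 2) K) ^ (d - 1)})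
    (h : Fin d → MvPolynomial (Fin 2) K) (hind : LinearIndependent K h)
    (hspan : (Submodule.span K (Set.range h) : Set (MvPolynomial (Fin 2) K))
      = {G | G.IsHomogeneous d ∧ apolar G f = 0}) :
    (((RingHom.ker (aeval h : MvPolynomial (Fin d) K →ₐ[K] MvPolynomial (Fin 2) K)).restrictScalars K
        ⊓ homogeneousSubmodule (Fin d) K 2 : Submodule K (MvPolynomial (Fin d) K))
      = Submodule.span K {q : MvPolynomial (Fin d) K |
          q ∈ RingHom.ker (aeval h : MvPolynomial (Fin d) K →ₐ[K] MvPolynomial (Fin 2) K)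
          ∧ q.IsHomogeneous 2 ∧ rankLE 3 q})
    ∧ Ideal.span {q : MvPolynomial (Fin d) K |
        q ∈ RingHom.ker (aeval h : MvPolynomial (Fin d) K →ₐ[K] MvPolynomial (Fin 2) K)
        ∧ q.IsHomogeneous 2}
      = Ideal.span {q : MvPolynomial (Fin d) K |
          q ∈ Ideal.span {q' : MvPolynomial (Fin d) K |
            q' ∈ RingHom.ker (aeval h : MvPolynomial (Fin d) K →ₐ[K] MvPolynomial (Fin 2) K)
            ∧ q'.IsHomogeneous 2}
          ∧ q.IsHomogeneous 2 ∧ rankLE 3 q} := by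
  obtain ⟨ι, hι⟩ : ∃ z : K, z ^ 2 = -1 := IsAlgClosed.exists_pow_nat_eq (-1 : K) (by norm_num)
  obtain ⟨y, hy1, hy2, hX⟩ := Stmt14.exists_y hd f hann h hind hspan
  exact ⟨Stmt14.conj1 hd h y hy1 hy2 ι hι hX, Stmt14.conj2 hd h y hy1 hy2 ι hι hX⟩
end
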